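/- arXiv:0906.5089 — 3 statements merged into one kernel-verified Lean document; each statement's English description precedes it below -/
import Mathlib

section
/- Let T1 and T2 be two unrooted phylogenetic trees chosen independently and uniformly at random (with replacement) from P(n), the set of all unrooted phylogenies over the taxon set [n]. Then for every p ∈ [0,1], the expected parametric quartet distance satisfies E(d^(p)(T1,T2)) = C(n,4) · ( (2/3)·r(n)^2 + 2·p·r(n)·u(n) ), where C(n,4) is the binomial coefficient 'n choose 4'. -/
open Finset

attribute [local instance] Classical.propDecidable

/-- An unrooted phylogenetic tree over the taxon set `Fin n`, encoded by its split
system: the collection of all sets of leaves lying on one side of some edge of the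
tree.  By the splits-equivalence (Buneman) theorem, the families satisfying these
conditions (all trivial splits present, closure under complementation, pairwise
compatibility) correspond exactly to unrooted phylogenies in which every internal
node has degree at least three. -/
structure UTree (n : ℕ) where
  splits : Finset (Finset (Fin n))
  empty_not_mem : ∅ ∉ splits
  trivial_mem : ∀ x : Fin n, ({x} : Finset (Fin n)) = Finset.univ ∨ {x} ∈ splits
  compl_mem : ∀ A ∈ splits, Finset.univ \ A ∈ splits
  compat : ∀ A ∈ splits, ∀ B ∈ splits, A ⊆ B ∨ B ⊆ A ∨ A ∩ B = ∅ ∨ A ∪ B = Finset.univ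

/-- All quartets (4-element subsets) of `Fin n`. -/
def quartets (n : ℕ) : Finset (Finset (Fin n)) :=
  Finset.powersetCard 4 Finset.univ

/-- The split system of the restriction `T|X`, for an unrooted tree with split
system `F`: the proper nonempty intersections of split sides with `X`. -/
noncomputable def famRestrictU {n : ℕ} (F : Finset (Finset (Fin n))) (X : Finset (Fin n)) :
    Finset (Finset (Fin n)) :=
  (F.image (· ∩ X)).filter fun A => A ≠ ∅ ∧ A ≠ X

/-- A quartet `X` is resolved in an unrooted tree with split system `F` iff the
restriction `T|X` is fully resolved, equivalently iff some split side contains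
exactly two of the four elements of `X`. -/
def famResolvedU {n : ℕ} (F : Finset (Finset (Fin n))) (X : Finset (Fin n)) : Prop :=
  ∃ A ∈ F, (A ∩ X).card = 2

/-- Quartets resolved, identically, in both trees. -/
noncomputable def famSetSU {n : ℕ} (F G : Finset (Finset (Fin n))) :
    Finset (Finset (Fin n)) :=
  (quartets n).filter fun X =>
    famResolvedU F X ∧ famResolvedU G X ∧ famRestrictU F X = famRestrictU G X

/-- Quartets resolved, differently, in both trees. -/
noncomputable def famSetDU {n : ℕ} (F G : Finset (Finset (Fin n))) :
    Finset (Finset (Fin n)) :=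
  (quartets n).filter fun X =>
    famResolvedU F X ∧ famResolvedU G X ∧ famRestrictU F X ≠ famRestrictU G X

/-- Quartets resolved in the first tree but not in the second. -/
noncomputable def famSetR1U {n : ℕ} (F G : Finset (Finset (Fin n))) :
    Finset (Finset (Fin n)) :=
  (quartets n).filter fun X => famResolvedU F X ∧ ¬ famResolvedU G X

/-- Quartets resolved in the second tree but not in the first. -/
noncomputable def famSetR2U {n : ℕ} (F G : Finset (Finset (Fin n))) :
    Finset (Finset (Fin n)) :=
  (quartets n).filter fun X => famResolvedU G X ∧ ¬ famResolvedU F X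

/-- Quartets unresolved in both trees. -/
noncomputable def famSetUU {n : ℕ} (F G : Finset (Finset (Fin n))) :
    Finset (Finset (Fin n)) :=
  (quartets n).filter fun X => ¬ famResolvedU F X ∧ ¬ famResolvedU G X

/-- The parametric quartet distance, at the level of split systems. -/
noncomputable def famPdistU {n : ℕ} (p : ℝ) (F G : Finset (Finset (Fin n))) : ℝ :=
  ((famSetDU F G).card : ℝ) +
    p * (((famSetR1U F G).card : ℝ) + ((famSetR2U F G).card : ℝ))

namespace UTree

variable {n : ℕ}

/-- The split system of the restriction `T|X`. -/
noncomputable def restrict (T : UTree n) (X : Finset (Fin n)) : Finset (Finset (Fin n)) :=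
  famRestrictU T.splits X

/-- The quartet `X` is resolved in `T`, i.e. `T|X` is fully resolved. -/
def Resolved (T : UTree n) (X : Finset (Fin n)) : Prop :=
  famResolvedU T.splits X

/-- An unrooted phylogeny is fully resolved (all internal nodes have degree exactly
three) iff every quartet is resolved in it. -/
def FullyResolved (T : UTree n) : Prop :=
  ∀ X ∈ quartets n, T.Resolved X

noncomputable def setS (T₁ T₂ : UTree n) : Finset (Finset (Fin n)) :=
  famSetSU T₁.splits T₂.splits

noncomputable def setD (T₁ T₂ : UTree n) : Finset (Finset (Fin n)) :=
  famSetDU T₁.splits T₂.splits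

noncomputable def setR1 (T₁ T₂ : UTree n) : Finset (Finset (Fin n)) :=
  famSetR1U T₁.splits T₂.splits

noncomputable def setR2 (T₁ T₂ : UTree n) : Finset (Finset (Fin n)) :=
  famSetR2U T₁.splits T₂.splits

noncomputable def setU (T₁ T₂ : UTree n) : Finset (Finset (Fin n)) :=
  famSetUU T₁.splits T₂.splits

/-- The parametric quartet distance `d⁽ᵖ⁾(T₁,T₂)`. -/
noncomputable def pdist (p : ℝ) (T₁ T₂ : UTree n) : ℝ :=
  famPdistU p T₁.splits T₂.splits

theorem splits_injective : Function.Injective (splits (n := n)) := by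
  rintro ⟨s₁, _, _, _, _⟩ ⟨s₂, _, _, _, _⟩ h
  simp only [mk.injEq] at h ⊢
  exact h

noncomputable instance : Fintype (UTree n) :=
  Fintype.ofInjective splits splits_injective

end UTree

/-- `r(n)` : the probability that the fixed quartet `X` is resolved in an unrooted
phylogeny chosen uniformly at random from `P(n)`.  (By symmetry this does not depend
on the choice of the quartet `X`.) -/
noncomputable def uResProb (n : ℕ) (X : Finset (Fin n)) : ℝ :=
  ((Finset.univ.filter fun T : UTree n => T.Resolved X).card : ℝ) /
    (Fintype.card (UTree n) : ℝ)


section Aux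
variable {n : ℕ}

lemma mem_famRestrictU {F : Finset (Finset (Fin n))} {X A : Finset (Fin n)} :
    A ∈ famRestrictU F X ↔ (∃ B ∈ F, B ∩ X = A) ∧ A ≠ ∅ ∧ A ≠ X := by
  simp [famRestrictU, Finset.mem_filter, Finset.mem_image]

lemma subset_of_mem_famRestrictU {F : Finset (Finset (Fin n))} {X A : Finset (Fin n)}
    (h : A ∈ famRestrictU F X) : A ⊆ X := by
  rcases (mem_famRestrictU.1 h).1 with ⟨B, _, rfl⟩
  exact Finset.inter_subset_right

lemma image_inter_image (σ : Equiv.Perm (Fin n)) (A B : Finset (Fin n)) :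
    A.image σ ∩ B.image σ = (A ∩ B).image σ := (Finset.image_inter _ _ σ.injective).symm

lemma image_univ_perm (σ : Equiv.Perm (Fin n)) :
    (Finset.univ : Finset (Fin n)).image σ = Finset.univ :=
  Finset.image_univ_equiv σ

lemma image_sdiff_univ (σ : Equiv.Perm (Fin n)) (A : Finset (Fin n)) :
    (Finset.univ \ A).image σ = Finset.univ \ A.image σ := by
  rw [Finset.image_sdiff _ _ σ.injective, image_univ_perm]

lemma famRestrictU_image (σ : Equiv.Perm (Fin n)) (F : Finset (Finset (Fin n)))
    (X : Finset (Fin n)) :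
    famRestrictU (F.image (Finset.image σ)) (X.image σ)
      = (famRestrictU F X).image (Finset.image σ) := by
  have hinj : Function.Injective (Finset.image σ : Finset (Fin n) → Finset (Fin n)) :=
    Finset.image_injective σ.injective
  ext A
  constructor
  · intro h
    rcases mem_famRestrictU.1 h with ⟨⟨B, hB, hBA⟩, hne, hnX⟩
    rcases Finset.mem_image.1 hB with ⟨C, hC, rfl⟩
    rw [image_inter_image] at hBA
    refine Finset.mem_image.2 ⟨C ∩ X, mem_famRestrictU.2 ⟨⟨C, hC, rfl⟩, ?_, ?_⟩, hBA⟩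
    · intro h'; rw [h'] at hBA; simp at hBA; exact hne hBA.symm
    · intro h'; rw [h'] at hBA
      exact hnX hBA.symm
  · intro h
    rcases Finset.mem_image.1 h with ⟨D, hD, rfl⟩
    rcases mem_famRestrictU.1 hD with ⟨⟨B, hB, hBA⟩, hne, hnX⟩
    refine mem_famRestrictU.2 ⟨⟨B.image σ, Finset.mem_image_of_mem _ hB, ?_⟩, ?_, ?_⟩
    · rw [image_inter_image, hBA]
    · simp only [ne_eq, Finset.image_eq_empty]; exact hne
    · intro h'; exact hnX (hinj h')

lemma mem_famRestrictU_image {σ : Equiv.Perm (Fin n)} {F : Finset (Finset (Fin n))}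
    {X P : Finset (Fin n)} :
    P.image σ ∈ famRestrictU (F.image (Finset.image σ)) (X.image σ) ↔ P ∈ famRestrictU F X := by
  rw [famRestrictU_image]
  constructor
  · intro h
    rcases Finset.mem_image.1 h with ⟨Q, hQ, hQP⟩
    rwa [Finset.image_injective σ.injective hQP] at hQ
  · exact fun h => Finset.mem_image_of_mem _ h

lemma famResolvedU_image {σ : Equiv.Perm (Fin n)} {F : Finset (Finset (Fin n))}
    {X : Finset (Fin n)} :
    famResolvedU (F.image (Finset.image σ)) (X.image σ) ↔ famResolvedU F X := by
  constructor
  · rintro ⟨A, hA, h2⟩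
    rcases Finset.mem_image.1 hA with ⟨B, hB, rfl⟩
    rw [image_inter_image, Finset.card_image_of_injective _ σ.injective] at h2
    exact ⟨B, hB, h2⟩
  · rintro ⟨A, hA, h2⟩
    refine ⟨A.image σ, Finset.mem_image_of_mem _ hA, ?_⟩
    rw [image_inter_image, Finset.card_image_of_injective _ σ.injective]
    exact h2

noncomputable def permUTree (σ : Equiv.Perm (Fin n)) (T : UTree n) : UTree n where
  splits := T.splits.image (Finset.image σ)
  empty_not_mem := by
    intro h
    rcases Finset.mem_image.1 h with ⟨A, hA, hA0⟩
    rw [Finset.image_eq_empty] at hA0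
    exact T.empty_not_mem (hA0 ▸ hA)
  trivial_mem := by
    intro x
    rcases T.trivial_mem (σ.symm x) with h | h
    · left
      have := congrArg (Finset.image σ) h
      rw [image_univ_perm] at this
      simpa using this
    · right
      refine Finset.mem_image.2 ⟨_, h, ?_⟩
      simp
  compl_mem := by
    intro A hA
    rcases Finset.mem_image.1 hA with ⟨B, hB, rfl⟩
    exact Finset.mem_image.2 ⟨Finset.univ \ B, T.compl_mem B hB, image_sdiff_univ σ B⟩
  compat := by
    intro A hA B hB
    rcases Finset.mem_image.1 hA with ⟨C, hC, rfl⟩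
    rcases Finset.mem_image.1 hB with ⟨D, hD, rfl⟩
    rcases T.compat C hC D hD with h | h | h | h
    · exact Or.inl (Finset.image_subset_image h)
    · exact Or.inr (Or.inl (Finset.image_subset_image h))
    · refine Or.inr (Or.inr (Or.inl ?_))
      rw [image_inter_image, h, Finset.image_empty]
    · refine Or.inr (Or.inr (Or.inr ?_))
      rw [← Finset.image_union, h, image_univ_perm]

lemma permUTree_symm_apply (σ : Equiv.Perm (Fin n)) (T : UTree n) :
    permUTree σ.symm (permUTree σ T) = T := by
  have : (permUTree σ.symm (permUTree σ T)).splits = T.splits := by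
    simp only [permUTree, Finset.image_image]
    have : (Finset.image ⇑σ.symm ∘ Finset.image ⇑σ) = id := by
      funext A
      simp [Finset.image_image]
    rw [this, Finset.image_id]
  cases T
  cases h' : permUTree σ.symm (permUTree σ _)
  simp_all

lemma nonempty_utree (hn : 2 ≤ n) : Nonempty (UTree n) := by
  have hcard : (Finset.univ : Finset (Fin n)).card = n := by simp
  refine ⟨⟨(Finset.univ.image fun x : Fin n => ({x} : Finset (Fin n))) ∪
      (Finset.univ.image fun x : Fin n => Finset.univ \ {x}), ?_, ?_, ?_, ?_⟩⟩
  · intro h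
    rcases Finset.mem_union.1 h with h | h <;> rcases Finset.mem_image.1 h with ⟨x, _, hx⟩
    · exact Finset.singleton_ne_empty x hx
    · have hc := congrArg Finset.card hx
      rw [Finset.card_sdiff_of_subset (by simp)] at hc
      simp [hcard] at hc
      omega
  · intro x
    right
    exact Finset.mem_union_left _ (Finset.mem_image.2 ⟨x, Finset.mem_univ x, rfl⟩)
  · intro A hA
    rcases Finset.mem_union.1 hA with h | h <;> rcases Finset.mem_image.1 h with ⟨x, _, hx⟩
    · exact Finset.mem_union_right _ (Finset.mem_image.2 ⟨x, Finset.mem_univ x, by rw [hx]⟩)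
    · refine Finset.mem_union_left _ (Finset.mem_image.2 ⟨x, Finset.mem_univ x, ?_⟩)
      rw [← hx]
      ext z
      simp
  · intro A hA B hB
    rcases Finset.mem_union.1 hA with h | h <;> rcases Finset.mem_image.1 h with ⟨x, _, hx⟩ <;>
      rcases Finset.mem_union.1 hB with h' | h' <;> rcases Finset.mem_image.1 h' with ⟨y, _, hy⟩ <;>
      subst hx <;> subst hy
    · by_cases hxy : x = y
      · subst hxy; exact Or.inl subset_rfl
      · refine Or.inr (Or.inr (Or.inl ?_))
        simp [Finset.singleton_inter_of_notMem, hxy]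
    · by_cases hxy : x = y
      · subst hxy
        refine Or.inr (Or.inr (Or.inr ?_))
        simp
      · refine Or.inl ?_
        rw [Finset.singleton_subset_iff, Finset.mem_sdiff, Finset.mem_singleton]
        exact ⟨Finset.mem_univ x, hxy⟩
    · by_cases hxy : x = y
      · subst hxy
        refine Or.inr (Or.inr (Or.inr ?_))
        simp
      · refine Or.inr (Or.inl ?_)
        rw [Finset.singleton_subset_iff, Finset.mem_sdiff, Finset.mem_singleton]
        exact ⟨Finset.mem_univ y, fun h => hxy h.symm⟩
    · by_cases hxy : x = y
      · subst hxy
        exact Or.inl subset_rfl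
      · refine Or.inr (Or.inr (Or.inr ?_))
        apply Finset.eq_univ_of_forall
        intro z
        simp only [Finset.mem_union, Finset.mem_sdiff, Finset.mem_univ, true_and,
          Finset.mem_singleton]
        by_cases hzx : z = x
        · subst hzx
          exact Or.inr hxy
        · exact Or.inl hzx

/-- resolvedness in terms of the restriction -/
lemma famResolvedU_iff {F : Finset (Finset (Fin n))} {X : Finset (Fin n)} (hX : X.card = 4) :
    famResolvedU F X ↔ ∃ P ∈ famRestrictU F X, P.card = 2 := by
  constructor
  · rintro ⟨A, hA, h2⟩
    refine ⟨A ∩ X, mem_famRestrictU.2 ⟨⟨A, hA, rfl⟩, ?_, ?_⟩, h2⟩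
    · intro h; rw [h] at h2; simp at h2
    · intro h; rw [h, hX] at h2; omega
  · rintro ⟨P, hP, h2⟩
    rcases (mem_famRestrictU.1 hP).1 with ⟨B, hB, rfl⟩
    exact ⟨B, hB, h2⟩

/-- the complement (in `X`) of a 2-set in the restriction is also in the restriction -/
lemma compl_two_mem (T : UTree n) {X P : Finset (Fin n)} (hX : X.card = 4)
    (hP : P ∈ famRestrictU T.splits X) (h2 : P.card = 2) :
    X \ P ∈ famRestrictU T.splits X := by
  rcases (mem_famRestrictU.1 hP).1 with ⟨B, hB, rfl⟩
  refine mem_famRestrictU.2 ⟨⟨Finset.univ \ B, T.compl_mem B hB, ?_⟩, ?_, ?_⟩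
  · ext z
    simp only [Finset.mem_inter, Finset.mem_sdiff, Finset.mem_univ, true_and]
    tauto
  · intro h
    have := congrArg Finset.card h
    rw [Finset.card_sdiff_of_subset Finset.inter_subset_right, hX, h2] at this
    simp at this
  · intro h
    have := congrArg Finset.card h
    rw [Finset.card_sdiff_of_subset Finset.inter_subset_right, hX, h2] at this
    omega

/-- any two 2-sets in the restriction are equal or complementary (compatibility) -/
lemma two_mem_eq_or_compl (T : UTree n) {X P Q : Finset (Fin n)} (hX : X.card = 4)
    (hP : P ∈ famRestrictU T.splits X) (h2P : P.card = 2)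
    (hQ : Q ∈ famRestrictU T.splits X) (h2Q : Q.card = 2) :
    Q = P ∨ Q = X \ P := by
  have hPX : P ⊆ X := subset_of_mem_famRestrictU hP
  have hQX : Q ⊆ X := subset_of_mem_famRestrictU hQ
  have hcds : (X \ P).card = 2 := by rw [Finset.card_sdiff_of_subset hPX, hX, h2P]
  rcases (mem_famRestrictU.1 hP).1 with ⟨A, hA, rfl⟩
  rcases (mem_famRestrictU.1 hQ).1 with ⟨B, hB, rfl⟩
  have hdisj : (A ∩ X) ∩ (B ∩ X) = ∅ → B ∩ X = X \ (A ∩ X) := by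
    intro h
    apply Finset.eq_of_subset_of_card_le
    · intro z hz
      rw [Finset.mem_sdiff]
      refine ⟨hQX hz, fun hzP => ?_⟩
      have : z ∈ (A ∩ X) ∩ (B ∩ X) := Finset.mem_inter.2 ⟨hzP, hz⟩
      rw [h] at this
      simp at this
    · rw [hcds, h2Q]
  rcases T.compat A hA B hB with h | h | h | h
  · left
    apply (Finset.eq_of_subset_of_card_le (fun z hz => ?_) (by rw [h2P, h2Q])).symm
    rw [Finset.mem_inter] at hz ⊢
    exact ⟨h hz.1, hz.2⟩
  · left
    apply Finset.eq_of_subset_of_card_le (fun z hz => ?_) (by rw [h2P, h2Q])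
    rw [Finset.mem_inter] at hz ⊢
    exact ⟨h hz.1, hz.2⟩
  · right
    apply hdisj
    rw [Finset.eq_empty_iff_forall_notMem] at h ⊢
    intro z hz
    simp only [Finset.mem_inter] at hz
    exact h z (Finset.mem_inter.2 ⟨hz.1.1, hz.2.1⟩)
  · right
    apply hdisj
    have hun : (A ∩ X) ∪ (B ∩ X) = X := by
      rw [← Finset.union_inter_distrib_right, h, Finset.univ_inter]
    have := Finset.card_union_add_card_inter (A ∩ X) (B ∩ X)
    rw [hun, hX, h2P, h2Q] at this
    rw [← Finset.card_eq_zero]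
    omega

/-- full characterization of the restriction of a resolved tree -/
lemma mem_restrict_iff (T : UTree n) (hn : 4 ≤ n) {X P : Finset (Fin n)} (hX : X.card = 4)
    (hP : P ∈ famRestrictU T.splits X) (h2P : P.card = 2) (A : Finset (Fin n)) :
    A ∈ famRestrictU T.splits X ↔
      A ⊆ X ∧ A ≠ ∅ ∧ A ≠ X ∧ (A.card = 2 → A = P ∨ A = X \ P) := by
  have hsing : ∀ x ∈ X, ({x} : Finset (Fin n)) ∈ famRestrictU T.splits X := by
    intro x hx
    have h1 : ({x} : Finset (Fin n)) ∈ T.splits := by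
      rcases T.trivial_mem x with h | h
      · exfalso
        have := congrArg Finset.card h
        simp at this
        omega
      · exact h
    refine mem_famRestrictU.2 ⟨⟨{x}, h1, ?_⟩, by simp, ?_⟩
    · rw [Finset.inter_eq_left, Finset.singleton_subset_iff]; exact hx
    · intro h
      have := congrArg Finset.card h
      rw [hX] at this
      simp at this
  constructor
  · intro hA
    refine ⟨subset_of_mem_famRestrictU hA, (mem_famRestrictU.1 hA).2.1,
      (mem_famRestrictU.1 hA).2.2, fun h2A => two_mem_eq_or_compl T hX hP h2P hA h2A⟩
  · rintro ⟨hAX, hA0, hAX', h2⟩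
    have hcard : A.card ≤ 4 := hX ▸ Finset.card_le_card hAX
    have hcard1 : 1 ≤ A.card := Finset.card_pos.2 (Finset.nonempty_iff_ne_empty.2 hA0)
    have hcard3 : A.card ≠ 4 := fun h =>
      hAX' (Finset.eq_of_subset_of_card_le hAX (by omega))
    interval_cases h : A.card
    · -- card 1
      rcases Finset.card_eq_one.1 h with ⟨x, rfl⟩
      exact hsing x (hAX (Finset.mem_singleton_self x))
    · -- card 2
      rcases h2 rfl with rfl | rfl
      · exact hP
      · exact compl_two_mem T hX hP h2P
    · -- card 3
      have hXA : (X \ A).card = 1 := by rw [Finset.card_sdiff_of_subset hAX, hX, h]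
      rcases Finset.card_eq_one.1 hXA with ⟨x, hx⟩
      have hxX : x ∈ X := by
        have : x ∈ X \ A := hx ▸ Finset.mem_singleton_self x
        exact (Finset.mem_sdiff.1 this).1
      have h1 : ({x} : Finset (Fin n)) ∈ T.splits := by
        rcases T.trivial_mem x with h' | h'
        · exfalso
          have := congrArg Finset.card h'
          simp at this
          omega
        · exact h'
      refine mem_famRestrictU.2 ⟨⟨Finset.univ \ {x}, T.compl_mem _ h1, ?_⟩, hA0, hAX'⟩
      have : (Finset.univ \ {x}) ∩ X = X \ {x} := by
        ext z
        simp only [Finset.mem_inter, Finset.mem_sdiff, Finset.mem_univ, true_and]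
        tauto
      rw [this, ← hx]
      exact Finset.sdiff_sdiff_eq_self hAX
    · -- card 4
      exact absurd rfl hcard3

lemma restrict_eq_of_same_class (T₁ T₂ : UTree n) (hn : 4 ≤ n) {X P : Finset (Fin n)}
    (hX : X.card = 4) (h2P : P.card = 2)
    (h1 : P ∈ famRestrictU T₁.splits X) (h2 : P ∈ famRestrictU T₂.splits X) :
    famRestrictU T₁.splits X = famRestrictU T₂.splits X := by
  ext A
  rw [mem_restrict_iff T₁ hn hX h1 h2P, mem_restrict_iff T₂ hn hX h2 h2P]

lemma two_subset_cases {a b c d : Fin n} {P : Finset (Fin n)}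
    (hP : P ⊆ ({a, b, c, d} : Finset (Fin n))) (h2 : P.card = 2) (ha : a ∈ P) :
    P = {a, b} ∨ P = {a, c} ∨ P = {a, d} := by
  have h' : (P.erase a).card = 1 := by rw [Finset.card_erase_of_mem ha, h2]
  obtain ⟨y, hy⟩ := Finset.card_eq_one.1 h'
  have hyP : y ∈ P.erase a := hy ▸ Finset.mem_singleton_self y
  have hya : y ≠ a := (Finset.mem_erase.1 hyP).1
  have hPy : P = {a, y} := by
    rw [← Finset.insert_erase ha, hy]
  have hyX : y ∈ ({a, b, c, d} : Finset (Fin n)) := hP (Finset.mem_of_mem_erase hyP)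
  simp only [Finset.mem_insert, Finset.mem_singleton] at hyX
  rcases hyX with h | h | h | h
  · exact absurd h hya
  · subst h; exact Or.inl hPy
  · subst h; exact Or.inr (Or.inl hPy)
  · subst h; exact Or.inr (Or.inr hPy)

/-- A resolved tree has one of the three pairs containing `a` in its restriction. -/
lemma resolved_iff_cls {a b c d : Fin n} {X : Finset (Fin n)} (hX : X.card = 4)
    (hXeq : X = {a, b, c, d}) (hab : a ≠ b) (hac : a ≠ c) (had : a ≠ d) (T : UTree n) :
    famResolvedU T.splits X ↔
      ({a, b} : Finset (Fin n)) ∈ famRestrictU T.splits X ∨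
      ({a, c} : Finset (Fin n)) ∈ famRestrictU T.splits X ∨
      ({a, d} : Finset (Fin n)) ∈ famRestrictU T.splits X := by
  have haX : a ∈ X := by rw [hXeq]; simp
  have hXsub : X ⊆ ({a, b, c, d} : Finset (Fin n)) := hXeq.le
  constructor
  · intro h
    rcases (famResolvedU_iff hX).1 h with ⟨P, hP, h2P⟩
    by_cases ha : a ∈ P
    · rcases two_subset_cases ((subset_of_mem_famRestrictU hP).trans hXsub) h2P ha
        with h' | h' | h' <;> subst h' <;> tauto
    · have hQ := compl_two_mem T hX hP h2P
      have h2Q : (X \ P).card = 2 := by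
        rw [Finset.card_sdiff_of_subset (subset_of_mem_famRestrictU hP), hX, h2P]
      have haQ : a ∈ X \ P := Finset.mem_sdiff.2 ⟨haX, ha⟩
      rcases two_subset_cases ((subset_of_mem_famRestrictU hQ).trans hXsub) h2Q haQ
        with h' | h' | h' <;> rw [h'] at hQ <;> tauto
  · intro h
    apply (famResolvedU_iff hX).2
    rcases h with h | h | h
    · exact ⟨_, h, by rw [Finset.card_insert_of_notMem (by simp [hab]), Finset.card_singleton]⟩
    · exact ⟨_, h, by rw [Finset.card_insert_of_notMem (by simp [hac]), Finset.card_singleton]⟩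
    · exact ⟨_, h, by rw [Finset.card_insert_of_notMem (by simp [had]), Finset.card_singleton]⟩

/-- classes related by a permutation fixing `X` have the same cardinality -/
lemma clsSet_card_eq (σ : Equiv.Perm (Fin n)) {X P : Finset (Fin n)} (hσX : X.image σ = X) :
    (Finset.univ.filter fun T : UTree n => P ∈ famRestrictU T.splits X).card
      = (Finset.univ.filter fun T : UTree n => P.image σ ∈ famRestrictU T.splits X).card := by
  have hXsymm : X.image σ.symm = X := by
    nth_rewrite 1 [← hσX]
    rw [Finset.image_image, Equiv.symm_comp_self, Finset.image_id]
  apply Finset.card_nbij' (permUTree σ) (permUTree σ.symm)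
  · intro T hT
    simp only [Finset.coe_filter, Set.mem_setOf_eq, Finset.mem_filter, Finset.mem_univ, true_and] at hT ⊢
    show P.image σ ∈ famRestrictU (T.splits.image (Finset.image σ)) X
    rw [← hσX]
    exact mem_famRestrictU_image.2 hT
  · intro T hT
    simp only [Finset.coe_filter, Set.mem_setOf_eq, Finset.mem_filter, Finset.mem_univ, true_and] at hT ⊢
    show P ∈ famRestrictU (T.splits.image (Finset.image σ.symm)) X
    have hP : P = (P.image σ).image σ.symm := by
      rw [Finset.image_image, Equiv.symm_comp_self, Finset.image_id]
    rw [hP, ← hXsymm]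
    exact mem_famRestrictU_image.2 hT
  · intro T _
    exact permUTree_symm_apply σ T
  · intro T _
    have := permUTree_symm_apply σ.symm T
    rwa [Equiv.symm_symm] at this

/-- existence of a permutation carrying one finset onto another of the same size -/
lemma exists_perm_image {X Y : Finset (Fin n)} (h : X.card = Y.card) :
    ∃ σ : Equiv.Perm (Fin n), X.image σ = Y := by
  classical
  have hc : Xᶜ.card = Yᶜ.card := by
    rw [Finset.card_compl, Finset.card_compl, h]
  let e1 : {x // x ∈ X} ≃ {x // x ∈ Y} := Finset.equivOfCardEq h
  let e2' : {x : Fin n // x ∈ Xᶜ} ≃ {x : Fin n // x ∈ Yᶜ} := Finset.equivOfCardEq hc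
  let e2 : {x : Fin n // ¬x ∈ X} ≃ {x : Fin n // ¬x ∈ Y} :=
    ((Equiv.subtypeEquivRight (fun x => (Finset.mem_compl).symm)).trans e2').trans
      (Equiv.subtypeEquivRight (fun x => Finset.mem_compl))
  refine ⟨(Equiv.sumCompl (· ∈ X)).symm.trans ((e1.sumCongr e2).trans (Equiv.sumCompl (· ∈ Y))), ?_⟩
  apply Finset.eq_of_subset_of_card_le
  · intro y hy
    rcases Finset.mem_image.1 hy with ⟨x, hx, rfl⟩
    simp only [Equiv.trans_apply, Equiv.sumCompl_symm_apply_of_pos hx, Equiv.sumCongr_apply,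
      Sum.map_inl, Equiv.sumCompl_apply_inl]
    exact (e1 ⟨x, hx⟩).2
  · rw [Finset.card_image_of_injective _ (Equiv.injective _), h]

lemma resSet_card_eq {X Y : Finset (Fin n)} (h : X.card = Y.card) :
    (Finset.univ.filter fun T : UTree n => famResolvedU T.splits X).card
      = (Finset.univ.filter fun T : UTree n => famResolvedU T.splits Y).card := by
  obtain ⟨σ, hσ⟩ := exists_perm_image h
  apply Finset.card_nbij' (permUTree σ) (permUTree σ.symm)
  · intro T hT
    simp only [Finset.coe_filter, Set.mem_setOf_eq, Finset.mem_filter, Finset.mem_univ, true_and] at hT ⊢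
    show famResolvedU (T.splits.image (Finset.image σ)) Y
    rw [← hσ]
    exact famResolvedU_image.2 hT
  · intro T hT
    simp only [Finset.coe_filter, Set.mem_setOf_eq, Finset.mem_filter, Finset.mem_univ, true_and] at hT ⊢
    show famResolvedU (T.splits.image (Finset.image σ.symm)) X
    have h2 : X = Y.image σ.symm := by
      rw [← hσ, Finset.image_image, Equiv.symm_comp_self, Finset.image_id]
    rw [h2]
    exact famResolvedU_image.2 hT
  · intro T _
    exact permUTree_symm_apply σ T
  · intro T _
    have := permUTree_symm_apply σ.symm T
    rwa [Equiv.symm_symm] at this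

lemma card_eq_four' {X : Finset (Fin n)} (hX : X.card = 4) :
    ∃ a b c d : Fin n, a ≠ b ∧ a ≠ c ∧ a ≠ d ∧ b ≠ c ∧ b ≠ d ∧ c ≠ d ∧ X = {a, b, c, d} := by
  obtain ⟨a, t, hat, rfl, ht⟩ := Finset.card_eq_succ.1 hX
  obtain ⟨b, c, d, hbc, hbd, hcd, rfl⟩ := Finset.card_eq_three.1 ht
  simp only [Finset.mem_insert, Finset.mem_singleton, not_or] at hat
  exact ⟨a, b, c, d, hat.1, hat.2.1, hat.2.2, hbc, hbd, hcd, rfl⟩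

lemma three_mul_eqpairs (hn : 4 ≤ n) {X : Finset (Fin n)} (hX : X.card = 4) :
    3 * ((Finset.univ ×ˢ Finset.univ : Finset (UTree n × UTree n)).filter fun q =>
        famResolvedU q.1.splits X ∧ famResolvedU q.2.splits X ∧
          famRestrictU q.1.splits X = famRestrictU q.2.splits X).card
      = ((Finset.univ.filter fun T : UTree n => famResolvedU T.splits X).card) ^ 2 := by
  classical
  obtain ⟨a, b, c, d, hab, hac, had, hbc, hbd, hcd, hXeq⟩ := card_eq_four' hX
  set P1 : Finset (Fin n) := {a, b} with hP1
  set P2 : Finset (Fin n) := {a, c} with hP2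
  set P3 : Finset (Fin n) := {a, d} with hP3
  have h2P1 : P1.card = 2 := by
    rw [hP1, Finset.card_insert_of_notMem (by simp [hab]), Finset.card_singleton]
  have h2P2 : P2.card = 2 := by
    rw [hP2, Finset.card_insert_of_notMem (by simp [hac]), Finset.card_singleton]
  have h2P3 : P3.card = 2 := by
    rw [hP3, Finset.card_insert_of_notMem (by simp [had]), Finset.card_singleton]
  set C1 := Finset.univ.filter fun T : UTree n => P1 ∈ famRestrictU T.splits X with hC1
  set C2 := Finset.univ.filter fun T : UTree n => P2 ∈ famRestrictU T.splits X with hC2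
  set C3 := Finset.univ.filter fun T : UTree n => P3 ∈ famRestrictU T.splits X with hC3
  -- equal class sizes
  have himg12 : P1.image (Equiv.swap b c) = P2 := by
    rw [hP1, hP2, Finset.image_insert, Finset.image_singleton,
      Equiv.swap_apply_of_ne_of_ne hab hac, Equiv.swap_apply_left]
  have himg13 : P1.image (Equiv.swap b d) = P3 := by
    rw [hP1, hP3, Finset.image_insert, Finset.image_singleton,
      Equiv.swap_apply_of_ne_of_ne hab had, Equiv.swap_apply_left]
  have hXfix12 : X.image (Equiv.swap b c) = X := by
    rw [hXeq]
    simp only [Finset.image_insert, Finset.image_singleton,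
      Equiv.swap_apply_of_ne_of_ne hab hac, Equiv.swap_apply_left, Equiv.swap_apply_right,
      Equiv.swap_apply_of_ne_of_ne (fun h => hbd h.symm) (fun h => hcd h.symm)]
    ext z
    simp only [Finset.mem_insert, Finset.mem_singleton]
    tauto
  have hXfix13 : X.image (Equiv.swap b d) = X := by
    rw [hXeq]
    simp only [Finset.image_insert, Finset.image_singleton,
      Equiv.swap_apply_of_ne_of_ne hab had, Equiv.swap_apply_left, Equiv.swap_apply_right,
      Equiv.swap_apply_of_ne_of_ne (fun h => hbc h.symm) (fun h => hcd h)]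
    ext z
    simp only [Finset.mem_insert, Finset.mem_singleton]
    tauto
  have hc12 : C1.card = C2.card := by
    rw [hC1, hC2, ← himg12]
    exact clsSet_card_eq (Equiv.swap b c) hXfix12
  have hc13 : C1.card = C3.card := by
    rw [hC1, hC3, ← himg13]
    exact clsSet_card_eq (Equiv.swap b d) hXfix13
  -- pairwise disjointness of classes
  have hdisjkey : ∀ P Q : Finset (Fin n), P.card = 2 → Q.card = 2 → Q ≠ P → a ∈ P → a ∈ Q →
      ∀ T : UTree n, P ∈ famRestrictU T.splits X → Q ∈ famRestrictU T.splits X → False := by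
    intro P Q h2P h2Q hne haP haQ T hP hQ
    rcases two_mem_eq_or_compl T hX hP h2P hQ h2Q with h | h
    · exact hne h
    · rw [h] at haQ
      exact (Finset.mem_sdiff.1 haQ).2 haP
  have hne21 : P2 ≠ P1 := by
    intro h
    have : c ∈ P1 := h ▸ (by rw [hP2]; simp)
    rw [hP1] at this
    simp only [Finset.mem_insert, Finset.mem_singleton] at this
    rcases this with h' | h' <;> [exact hac h'.symm; exact hbc h'.symm]
  have hne31 : P3 ≠ P1 := by
    intro h
    have : d ∈ P1 := h ▸ (by rw [hP3]; simp)
    rw [hP1] at this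
    simp only [Finset.mem_insert, Finset.mem_singleton] at this
    rcases this with h' | h' <;> [exact had h'.symm; exact hbd h'.symm]
  have hne32 : P3 ≠ P2 := by
    intro h
    have : d ∈ P2 := h ▸ (by rw [hP3]; simp)
    rw [hP2] at this
    simp only [Finset.mem_insert, Finset.mem_singleton] at this
    rcases this with h' | h' <;> [exact had h'.symm; exact hcd h'.symm]
  have haP1 : a ∈ P1 := by rw [hP1]; simp
  have haP2 : a ∈ P2 := by rw [hP2]; simp
  have haP3 : a ∈ P3 := by rw [hP3]; simp
  have hd12 : Disjoint C1 C2 := by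
    rw [Finset.disjoint_left]
    intro T hT1 hT2
    rw [hC1, Finset.mem_filter] at hT1
    rw [hC2, Finset.mem_filter] at hT2
    exact hdisjkey P1 P2 h2P1 h2P2 hne21 haP1 haP2 T hT1.2 hT2.2
  have hd13 : Disjoint C1 C3 := by
    rw [Finset.disjoint_left]
    intro T hT1 hT2
    rw [hC1, Finset.mem_filter] at hT1
    rw [hC3, Finset.mem_filter] at hT2
    exact hdisjkey P1 P3 h2P1 h2P3 hne31 haP1 haP3 T hT1.2 hT2.2
  have hd23 : Disjoint C2 C3 := by
    rw [Finset.disjoint_left]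
    intro T hT1 hT2
    rw [hC2, Finset.mem_filter] at hT1
    rw [hC3, Finset.mem_filter] at hT2
    exact hdisjkey P2 P3 h2P2 h2P3 hne32 haP2 haP3 T hT1.2 hT2.2
  -- resolved set is the disjoint union of the classes
  have hres : (Finset.univ.filter fun T : UTree n => famResolvedU T.splits X) = C1 ∪ C2 ∪ C3 := by
    ext T
    simp only [Finset.mem_filter, Finset.mem_univ, true_and, Finset.mem_union, hC1, hC2, hC3]
    rw [resolved_iff_cls hX hXeq hab hac had T]
    tauto
  have hrcard : (Finset.univ.filter fun T : UTree n => famResolvedU T.splits X).card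
      = 3 * C1.card := by
    rw [hres, Finset.card_union_of_disjoint (by
        rw [Finset.disjoint_union_left]; exact ⟨hd13, hd23⟩),
      Finset.card_union_of_disjoint hd12, ← hc12, ← hc13]
    ring
  -- the pair set is the union of the three diagonal products
  have hpair : ((Finset.univ ×ˢ Finset.univ : Finset (UTree n × UTree n)).filter fun q =>
        famResolvedU q.1.splits X ∧ famResolvedU q.2.splits X ∧
          famRestrictU q.1.splits X = famRestrictU q.2.splits X)
      = (C1 ×ˢ C1) ∪ (C2 ×ˢ C2) ∪ (C3 ×ˢ C3) := by
    ext q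
    simp only [Finset.mem_filter, Finset.mem_product, Finset.mem_union, Finset.mem_univ,
      true_and, hC1, hC2, hC3]
    constructor
    · rintro ⟨h1, h2, heq⟩
      rcases (resolved_iff_cls hX hXeq hab hac had q.1).1 h1 with h | h | h
      · exact Or.inl (Or.inl ⟨h, heq ▸ h⟩)
      · exact Or.inl (Or.inr ⟨h, heq ▸ h⟩)
      · exact Or.inr ⟨h, heq ▸ h⟩
    · rintro ((⟨h1, h2⟩ | ⟨h1, h2⟩) | ⟨h1, h2⟩)
      · exact ⟨(resolved_iff_cls hX hXeq hab hac had q.1).2 (Or.inl h1),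
          (resolved_iff_cls hX hXeq hab hac had q.2).2 (Or.inl h2),
          restrict_eq_of_same_class q.1 q.2 hn hX h2P1 h1 h2⟩
      · exact ⟨(resolved_iff_cls hX hXeq hab hac had q.1).2 (Or.inr (Or.inl h1)),
          (resolved_iff_cls hX hXeq hab hac had q.2).2 (Or.inr (Or.inl h2)),
          restrict_eq_of_same_class q.1 q.2 hn hX h2P2 h1 h2⟩
      · exact ⟨(resolved_iff_cls hX hXeq hab hac had q.1).2 (Or.inr (Or.inr h1)),
          (resolved_iff_cls hX hXeq hab hac had q.2).2 (Or.inr (Or.inr h2)),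
          restrict_eq_of_same_class q.1 q.2 hn hX h2P3 h1 h2⟩
  have hdp : ∀ (A B : Finset (UTree n)), Disjoint A B → Disjoint (A ×ˢ A) (B ×ˢ B) := by
    intro A B hAB
    rw [Finset.disjoint_left]
    rintro ⟨q1, q2⟩ hq1 hq2
    rw [Finset.mem_product] at hq1 hq2
    exact Finset.disjoint_left.1 hAB hq1.1 hq2.1
  have hpcard : ((Finset.univ ×ˢ Finset.univ : Finset (UTree n × UTree n)).filter fun q =>
        famResolvedU q.1.splits X ∧ famResolvedU q.2.splits X ∧
          famRestrictU q.1.splits X = famRestrictU q.2.splits X).card = 3 * C1.card ^ 2 := by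
    rw [hpair, Finset.card_union_of_disjoint (by
        rw [Finset.disjoint_union_left]; exact ⟨hdp _ _ hd13, hdp _ _ hd23⟩),
      Finset.card_union_of_disjoint (hdp _ _ hd12), Finset.card_product, Finset.card_product,
      Finset.card_product, ← hc12, ← hc13]
    ring
  rw [hpcard, hrcard]
  ring

lemma perY_sum (hn : 4 ≤ n) (p : ℝ) {X : Finset (Fin n)} (hX : X.card = 4) :
    (∑ T₁ : UTree n, ∑ T₂ : UTree n,
      ((if famResolvedU T₁.splits X ∧ famResolvedU T₂.splits X ∧
            famRestrictU T₁.splits X ≠ famRestrictU T₂.splits X then (1 : ℝ) else 0)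
        + p * (if famResolvedU T₁.splits X ∧ ¬famResolvedU T₂.splits X then (1 : ℝ) else 0)
        + p * (if famResolvedU T₂.splits X ∧ ¬famResolvedU T₁.splits X then (1 : ℝ) else 0)))
    = 2 / 3 * ((Finset.univ.filter fun T : UTree n => famResolvedU T.splits X).card : ℝ) ^ 2
      + 2 * p * ((Finset.univ.filter fun T : UTree n => famResolvedU T.splits X).card : ℝ) *
        ((Fintype.card (UTree n) : ℝ)
          - ((Finset.univ.filter fun T : UTree n => famResolvedU T.splits X).card : ℝ)) := by
  classical
  set r : ℕ := (Finset.univ.filter fun T : UTree n => famResolvedU T.splits X).card with hr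
  set N : ℕ := Fintype.card (UTree n) with hN
  have hrN : r ≤ N := by
    rw [hr, hN, ← Finset.card_univ]
    exact Finset.card_filter_le _ _
  have hnotr : (Finset.univ.filter fun T : UTree n => ¬famResolvedU T.splits X).card = N - r := by
    have := Finset.card_filter_add_card_filter_not
      (s := (Finset.univ : Finset (UTree n))) (p := fun T => famResolvedU T.splits X)
    rw [Finset.card_univ] at this
    omega
  -- split the triple sum
  simp only [Finset.sum_add_distrib]
  rw [← Finset.sum_product', ← Finset.sum_product', ← Finset.sum_product']
  rw [← Finset.mul_sum, ← Finset.mul_sum, Finset.sum_boole, Finset.sum_boole, Finset.sum_boole]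
  -- last summand: independent-product count
  have hR1 : ((Finset.univ ×ˢ Finset.univ : Finset (UTree n × UTree n)).filter fun q =>
      famResolvedU q.1.splits X ∧ ¬famResolvedU q.2.splits X).card = r * (N - r) := by
    rw [Finset.filter_product (fun T : UTree n => famResolvedU T.splits X)
      (fun T : UTree n => ¬famResolvedU T.splits X), Finset.card_product, hnotr]
  have hR2 : ((Finset.univ ×ˢ Finset.univ : Finset (UTree n × UTree n)).filter fun q =>
      famResolvedU q.2.splits X ∧ ¬famResolvedU q.1.splits X).card = (N - r) * r := by
    have hswap : ((Finset.univ ×ˢ Finset.univ : Finset (UTree n × UTree n)).filter fun q =>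
        famResolvedU q.2.splits X ∧ ¬famResolvedU q.1.splits X)
        = ((Finset.univ ×ˢ Finset.univ : Finset (UTree n × UTree n)).filter fun q =>
        (¬famResolvedU q.1.splits X) ∧ famResolvedU q.2.splits X) := by
      apply Finset.filter_congr
      intro q _
      tauto
    rw [hswap, Finset.filter_product (fun T : UTree n => ¬famResolvedU T.splits X)
      (fun T : UTree n => famResolvedU T.splits X), Finset.card_product, hnotr]
  -- first summand
  have hRB : ((Finset.univ ×ˢ Finset.univ : Finset (UTree n × UTree n)).filter fun q =>
      famResolvedU q.1.splits X ∧ famResolvedU q.2.splits X).card = r * r := by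
    rw [Finset.filter_product (fun T : UTree n => famResolvedU T.splits X)
      (fun T : UTree n => famResolvedU T.splits X), Finset.card_product]
  have hsplit := Finset.card_filter_add_card_filter_not
    (s := (Finset.univ ×ˢ Finset.univ : Finset (UTree n × UTree n)).filter fun q =>
      famResolvedU q.1.splits X ∧ famResolvedU q.2.splits X)
    (p := fun q => famRestrictU q.1.splits X = famRestrictU q.2.splits X)
  rw [Finset.filter_filter, Finset.filter_filter, hRB] at hsplit
  have hEq : (((Finset.univ ×ˢ Finset.univ : Finset (UTree n × UTree n))).filter fun q =>
      (famResolvedU q.1.splits X ∧ famResolvedU q.2.splits X) ∧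
        famRestrictU q.1.splits X = famRestrictU q.2.splits X)
      = ((Finset.univ ×ˢ Finset.univ : Finset (UTree n × UTree n)).filter fun q =>
      famResolvedU q.1.splits X ∧ famResolvedU q.2.splits X ∧
        famRestrictU q.1.splits X = famRestrictU q.2.splits X) := by
    apply Finset.filter_congr
    intro q _
    tauto
  have hD : (((Finset.univ ×ˢ Finset.univ : Finset (UTree n × UTree n))).filter fun q =>
      (famResolvedU q.1.splits X ∧ famResolvedU q.2.splits X) ∧
        ¬famRestrictU q.1.splits X = famRestrictU q.2.splits X)
      = ((Finset.univ ×ˢ Finset.univ : Finset (UTree n × UTree n)).filter fun q =>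
      famResolvedU q.1.splits X ∧ famResolvedU q.2.splits X ∧
        famRestrictU q.1.splits X ≠ famRestrictU q.2.splits X) := by
    apply Finset.filter_congr
    intro q _
    tauto
  rw [hEq, hD] at hsplit
  have h3E := three_mul_eqpairs hn hX
  -- put the counts together over ℝ
  set dcard := ((Finset.univ ×ˢ Finset.univ : Finset (UTree n × UTree n)).filter fun q =>
      famResolvedU q.1.splits X ∧ famResolvedU q.2.splits X ∧
        famRestrictU q.1.splits X ≠ famRestrictU q.2.splits X).card with hdc
  set ecard := ((Finset.univ ×ˢ Finset.univ : Finset (UTree n × UTree n)).filter fun q =>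
      famResolvedU q.1.splits X ∧ famResolvedU q.2.splits X ∧
        famRestrictU q.1.splits X = famRestrictU q.2.splits X).card with hec
  rw [hR1, hR2]
  have hdreal : (dcard : ℝ) = 2 / 3 * (r : ℝ) ^ 2 := by
    have h1 : (ecard : ℝ) + (dcard : ℝ) = (r : ℝ) * r := by
      exact_mod_cast congrArg (Nat.cast : ℕ → ℝ) hsplit
    have h2 : 3 * (ecard : ℝ) = (r : ℝ) ^ 2 := by
      exact_mod_cast congrArg (Nat.cast : ℕ → ℝ) h3E
    nlinarith [h1, h2]
  rw [hdreal]
  have hsub : ((N - r : ℕ) : ℝ) = (N : ℝ) - r := by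
    rw [Nat.cast_sub hrN]
  push_cast [hsub]
  ring

end Aux

/-- **Theorem (expected parametric quartet distance).**  For `T₁`, `T₂` chosen
independently and uniformly at random from `P(n)` and any `p ∈ [0,1]`,
`E(d⁽ᵖ⁾(T₁,T₂)) = C(n,4) · ( (2/3)·r(n)² + 2·p·r(n)·u(n) )`, where `u(n) = 1 - r(n)`.
The expectation is written out as the average over all ordered pairs of trees. -/
theorem expected_parametric_quartet_distance (n : ℕ) (hn : 4 ≤ n)
    (p : ℝ) (hp0 : 0 ≤ p) (hp1 : p ≤ 1)
    (X : Finset (Fin n)) (hX : X.card = 4) :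
    (∑ T₁ : UTree n, ∑ T₂ : UTree n, UTree.pdist p T₁ T₂) /
        (Fintype.card (UTree n) : ℝ) ^ 2 =
      (n.choose 4 : ℝ) *
        (2 / 3 * uResProb n X ^ 2 +
          2 * p * uResProb n X * (1 - uResProb n X)) := by
  classical
  have hNpos : 0 < Fintype.card (UTree n) := by
    have : Nonempty (UTree n) := nonempty_utree (n := n) (by omega)
    exact Fintype.card_pos
  set N : ℕ := Fintype.card (UTree n) with hN
  have hNne : (N : ℝ) ≠ 0 := Nat.cast_ne_zero.2 hNpos.ne'
  set r : ℕ := (Finset.univ.filter fun T : UTree n => famResolvedU T.splits X).card with hr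
  have hprob : uResProb n X = (r : ℝ) / N := by
    simp only [uResProb, UTree.Resolved, hr, hN]; congr 3
  have key : ∀ T₁ T₂ : UTree n, UTree.pdist p T₁ T₂ =
      ∑ Y ∈ quartets n,
        ((if famResolvedU T₁.splits Y ∧ famResolvedU T₂.splits Y ∧
              famRestrictU T₁.splits Y ≠ famRestrictU T₂.splits Y then (1 : ℝ) else 0)
          + p * (if famResolvedU T₁.splits Y ∧ ¬famResolvedU T₂.splits Y then (1 : ℝ) else 0)
          + p * (if famResolvedU T₂.splits Y ∧ ¬famResolvedU T₁.splits Y then (1 : ℝ) else 0)) := by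
    intro T₁ T₂
    rw [UTree.pdist, famPdistU, famSetDU, famSetR1U, famSetR2U,
      Finset.card_filter, Finset.card_filter, Finset.card_filter]
    push_cast
    rw [Finset.sum_add_distrib, Finset.sum_add_distrib, ← Finset.mul_sum, ← Finset.mul_sum]
    ring
  have hqcard : (quartets n).card = n.choose 4 := by
    rw [quartets, Finset.card_powersetCard, Finset.card_univ, Fintype.card_fin]
  have hsum : (∑ T₁ : UTree n, ∑ T₂ : UTree n, UTree.pdist p T₁ T₂)
      = (n.choose 4 : ℝ) * (2 / 3 * (r : ℝ) ^ 2 + 2 * p * (r : ℝ) * ((N : ℝ) - r)) := by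
    calc ∑ T₁ : UTree n, ∑ T₂ : UTree n, UTree.pdist p T₁ T₂
        = ∑ T₁ : UTree n, ∑ Y ∈ quartets n, ∑ T₂ : UTree n,
            ((if famResolvedU T₁.splits Y ∧ famResolvedU T₂.splits Y ∧
                  famRestrictU T₁.splits Y ≠ famRestrictU T₂.splits Y then (1 : ℝ) else 0)
              + p * (if famResolvedU T₁.splits Y ∧ ¬famResolvedU T₂.splits Y then (1 : ℝ) else 0)
              + p * (if famResolvedU T₂.splits Y ∧ ¬famResolvedU T₁.splits Y then (1 : ℝ) else 0)) := by
          refine Finset.sum_congr rfl fun T₁ _ => ?_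
          simp only [key]
          exact Finset.sum_comm
      _ = ∑ Y ∈ quartets n, ∑ T₁ : UTree n, ∑ T₂ : UTree n,
            ((if famResolvedU T₁.splits Y ∧ famResolvedU T₂.splits Y ∧
                  famRestrictU T₁.splits Y ≠ famRestrictU T₂.splits Y then (1 : ℝ) else 0)
              + p * (if famResolvedU T₁.splits Y ∧ ¬famResolvedU T₂.splits Y then (1 : ℝ) else 0)
              + p * (if famResolvedU T₂.splits Y ∧ ¬famResolvedU T₁.splits Y then (1 : ℝ) else 0)) :=
          Finset.sum_comm
      _ = ∑ _Y ∈ quartets n,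
            (2 / 3 * (r : ℝ) ^ 2 + 2 * p * (r : ℝ) * ((N : ℝ) - r)) := by
          refine Finset.sum_congr rfl fun Y hY => ?_
          have hY4 : Y.card = 4 := (Finset.mem_powersetCard.1 hY).2
          rw [perY_sum hn p hY4, resSet_card_eq (show Y.card = X.card by rw [hX, hY4]), ← hr, ← hN]
      _ = (n.choose 4 : ℝ) * (2 / 3 * (r : ℝ) ^ 2 + 2 * p * (r : ℝ) * ((N : ℝ) - r)) := by
          rw [Finset.sum_const, hqcard, nsmul_eq_mul]
  rw [hsum, hprob]
  field_simp
end

section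
/- Let T1 and T2 be two rooted phylogenetic trees chosen independently and uniformly at random (with replacement) from RP(n), the set of all rooted phylogenies over the taxon set [n]. Then for every p ∈ [0,1], the expected parametric triplet distance satisfies E(d^(p)(T1,T2)) = C(n,3) · ( (2/3)·r(n+1)^2 + 2·p·r(n+1)·u(n+1) ), where r(n+1) and u(n+1) are the quartet resolution probabilities for uniformly random unrooted phylogenies over [n+1], and C(n,3) is 'n choose 3'. -/
open Finset

attribute [local instance] Classical.propDecidable

/-- A rooted phylogenetic tree over the taxon set `Fin n`, encoded by its hierarchy of
clusters: for each node of the tree, the set of leaves descending from that node.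
The conditions say that the whole leaf set and all singletons are clusters, the empty
set is not a cluster, and that the family is laminar.  Such families correspond exactly
to rooted phylogenies in which every internal node has at least two children. -/
structure RTree (n : ℕ) where
  clusters : Finset (Finset (Fin n))
  univ_mem : Finset.univ ∈ clusters
  singleton_mem : ∀ x : Fin n, {x} ∈ clusters
  empty_not_mem : ∅ ∉ clusters
  laminar : ∀ C ∈ clusters, ∀ D ∈ clusters, C ⊆ D ∨ D ⊆ C ∨ C ∩ D = ∅

/-- All triplets (3-element subsets) of `Fin n`. -/
def triplets (n : ℕ) : Finset (Finset (Fin n)) :=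
  Finset.powersetCard 3 Finset.univ

/-- The cluster family of the restriction `T|X`, for a rooted tree with cluster
family `F`: the nonempty intersections of clusters with `X`. -/
noncomputable def famRestrict {n : ℕ} (F : Finset (Finset (Fin n))) (X : Finset (Fin n)) :
    Finset (Finset (Fin n)) :=
  (F.image (· ∩ X)).filter (· ≠ ∅)

/-- A triplet `X` is resolved in a rooted tree with cluster family `F` iff the
restriction `T|X` is fully resolved, equivalently iff some cluster contains exactly
two of the three elements of `X`. -/
def famResolved {n : ℕ} (F : Finset (Finset (Fin n))) (X : Finset (Fin n)) : Prop :=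
  ∃ C ∈ F, (C ∩ X).card = 2

/-- Triplets resolved, identically, in both trees. -/
noncomputable def famSetS {n : ℕ} (F G : Finset (Finset (Fin n))) :
    Finset (Finset (Fin n)) :=
  (triplets n).filter fun X =>
    famResolved F X ∧ famResolved G X ∧ famRestrict F X = famRestrict G X

/-- Triplets resolved, differently, in both trees. -/
noncomputable def famSetD {n : ℕ} (F G : Finset (Finset (Fin n))) :
    Finset (Finset (Fin n)) :=
  (triplets n).filter fun X =>
    famResolved F X ∧ famResolved G X ∧ famRestrict F X ≠ famRestrict G X

/-- Triplets resolved in the first tree but not in the second. -/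
noncomputable def famSetR1 {n : ℕ} (F G : Finset (Finset (Fin n))) :
    Finset (Finset (Fin n)) :=
  (triplets n).filter fun X => famResolved F X ∧ ¬ famResolved G X

/-- Triplets resolved in the second tree but not in the first. -/
noncomputable def famSetR2 {n : ℕ} (F G : Finset (Finset (Fin n))) :
    Finset (Finset (Fin n)) :=
  (triplets n).filter fun X => famResolved G X ∧ ¬ famResolved F X

/-- Triplets unresolved in both trees. -/
noncomputable def famSetU {n : ℕ} (F G : Finset (Finset (Fin n))) :
    Finset (Finset (Fin n)) :=
  (triplets n).filter fun X => ¬ famResolved F X ∧ ¬ famResolved G X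

/-- The parametric triplet distance, at the level of cluster families. -/
noncomputable def famPdist {n : ℕ} (p : ℝ) (F G : Finset (Finset (Fin n))) : ℝ :=
  ((famSetD F G).card : ℝ) +
    p * (((famSetR1 F G).card : ℝ) + ((famSetR2 F G).card : ℝ))

namespace RTree

variable {n : ℕ}

/-- The cluster family of the restriction `T|X`. -/
noncomputable def restrict (T : RTree n) (X : Finset (Fin n)) : Finset (Finset (Fin n)) :=
  famRestrict T.clusters X

/-- The triplet `X` is resolved in `T`, i.e. `T|X` is fully resolved. -/
def Resolved (T : RTree n) (X : Finset (Fin n)) : Prop :=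
  famResolved T.clusters X

/-- A rooted phylogeny is fully resolved (all internal nodes have exactly two
children) iff every triplet is resolved in it. -/
def FullyResolved (T : RTree n) : Prop :=
  ∀ X ∈ triplets n, T.Resolved X

noncomputable def setS (T₁ T₂ : RTree n) : Finset (Finset (Fin n)) :=
  famSetS T₁.clusters T₂.clusters

noncomputable def setD (T₁ T₂ : RTree n) : Finset (Finset (Fin n)) :=
  famSetD T₁.clusters T₂.clusters

noncomputable def setR1 (T₁ T₂ : RTree n) : Finset (Finset (Fin n)) :=
  famSetR1 T₁.clusters T₂.clusters

noncomputable def setR2 (T₁ T₂ : RTree n) : Finset (Finset (Fin n)) :=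
  famSetR2 T₁.clusters T₂.clusters

noncomputable def setU (T₁ T₂ : RTree n) : Finset (Finset (Fin n)) :=
  famSetU T₁.clusters T₂.clusters

/-- The parametric triplet distance `d⁽ᵖ⁾(T₁,T₂)`. -/
noncomputable def pdist (p : ℝ) (T₁ T₂ : RTree n) : ℝ :=
  famPdist p T₁.clusters T₂.clusters

theorem clusters_injective : Function.Injective (clusters (n := n)) := by
  rintro ⟨s₁, _, _, _, _⟩ ⟨s₂, _, _, _, _⟩ h
  simp only [mk.injEq] at h ⊢
  exact h

noncomputable instance : Fintype (RTree n) :=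
  Fintype.ofInjective clusters clusters_injective

end RTree

section PermAction
variable {n : ℕ}

/-- Action of a permutation on a family of sets. -/
noncomputable def permFam (σ : Equiv.Perm (Fin n)) (F : Finset (Finset (Fin n))) :
    Finset (Finset (Fin n)) :=
  F.image (Finset.image σ)

lemma image_inv_image (σ : Equiv.Perm (Fin n)) (C : Finset (Fin n)) :
    (C.image (⇑σ)).image (⇑σ⁻¹) = C := by
  ext x
  simp only [Finset.mem_image]
  constructor
  · rintro ⟨y, ⟨z, hz, rfl⟩, rfl⟩; simpa using hz
  · intro hx; exact ⟨σ x, ⟨x, hx, rfl⟩, by simp⟩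

lemma permFam_inv (σ : Equiv.Perm (Fin n)) (F : Finset (Finset (Fin n))) :
    permFam σ⁻¹ (permFam σ F) = F := by
  unfold permFam
  rw [Finset.image_image]
  have : (Finset.image ⇑σ⁻¹ ∘ Finset.image ⇑σ) = id := by
    funext C; simp [Function.comp, Finset.image_image]
  rw [this, Finset.image_id]

lemma famResolved_permFam (σ : Equiv.Perm (Fin n)) (F : Finset (Finset (Fin n)))
    (X : Finset (Fin n)) :
    (∃ C ∈ permFam σ F, (C ∩ X.image σ).card = 2) ↔ ∃ C ∈ F, (C ∩ X).card = 2 := by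
  constructor
  · rintro ⟨C', hC', hcard⟩
    obtain ⟨C, hC, rfl⟩ := Finset.mem_image.mp hC'
    refine ⟨C, hC, ?_⟩
    rw [← Finset.image_inter _ _ σ.injective, Finset.card_image_of_injective _ σ.injective] at hcard
    exact hcard
  · rintro ⟨C, hC, hcard⟩
    refine ⟨C.image σ, Finset.mem_image_of_mem _ hC, ?_⟩
    rw [← Finset.image_inter _ _ σ.injective, Finset.card_image_of_injective _ σ.injective]
    exact hcard

lemma exists_inter_eq_perm (σ : Equiv.Perm (Fin n)) (F : Finset (Finset (Fin n)))
    (X P : Finset (Fin n)) :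
    (∃ C ∈ permFam σ F, C ∩ X.image σ = P.image σ) ↔ ∃ C ∈ F, C ∩ X = P := by
  constructor
  · rintro ⟨C', hC', heq⟩
    obtain ⟨C, hC, rfl⟩ := Finset.mem_image.mp hC'
    rw [← Finset.image_inter _ _ σ.injective] at heq
    exact ⟨C, hC, Finset.image_injective σ.injective heq⟩
  · rintro ⟨C, hC, rfl⟩
    exact ⟨C.image σ, Finset.mem_image_of_mem _ hC,
      (Finset.image_inter _ _ σ.injective).symm⟩

/-- Relabelling a rooted tree by a permutation of the taxa. -/
noncomputable def RTree.permT (σ : Equiv.Perm (Fin n)) (T : RTree n) : RTree n where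
  clusters := permFam σ T.clusters
  univ_mem := Finset.mem_image.mpr ⟨Finset.univ, T.univ_mem, Finset.image_univ_equiv σ⟩
  singleton_mem := fun x => Finset.mem_image.mpr ⟨{σ⁻¹ x}, T.singleton_mem _, by simp⟩
  empty_not_mem := by
    intro h
    obtain ⟨C, hC, hCe⟩ := Finset.mem_image.mp h
    rw [Finset.image_eq_empty] at hCe
    exact T.empty_not_mem (hCe ▸ hC)
  laminar := by
    intro C' hC' D' hD'
    obtain ⟨C, hC, rfl⟩ := Finset.mem_image.mp hC'
    obtain ⟨D, hD, rfl⟩ := Finset.mem_image.mp hD'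
    rcases T.laminar C hC D hD with h | h | h
    · exact Or.inl (Finset.image_subset_image h)
    · exact Or.inr (Or.inl (Finset.image_subset_image h))
    · refine Or.inr (Or.inr ?_)
      rw [← Finset.image_inter _ _ σ.injective, h, Finset.image_empty]

lemma RTree.permT_clusters (σ : Equiv.Perm (Fin n)) (T : RTree n) :
    (T.permT σ).clusters = permFam σ T.clusters := rfl

noncomputable def RTree.permEquiv (σ : Equiv.Perm (Fin n)) : RTree n ≃ RTree n where
  toFun := RTree.permT σ
  invFun := RTree.permT σ⁻¹
  left_inv := fun T => RTree.clusters_injective (permFam_inv σ T.clusters)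
  right_inv := fun T => RTree.clusters_injective (by
    have := permFam_inv σ⁻¹ T.clusters
    rw [inv_inv] at this; exact this)

/-- Relabelling an unrooted tree by a permutation of the taxa. -/
noncomputable def UTree.permT (σ : Equiv.Perm (Fin n)) (T : UTree n) : UTree n where
  splits := permFam σ T.splits
  empty_not_mem := by
    intro h
    obtain ⟨C, hC, hCe⟩ := Finset.mem_image.mp h
    rw [Finset.image_eq_empty] at hCe
    exact T.empty_not_mem (hCe ▸ hC)
  trivial_mem := fun x => by
    rcases T.trivial_mem (σ⁻¹ x) with h | h
    · left
      have : Finset.image (⇑σ) ({σ⁻¹ x} : Finset (Fin n)) = Finset.image (⇑σ) Finset.univ := by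
        rw [h]
      simpa [Finset.image_univ_equiv] using this
    · right
      exact Finset.mem_image.mpr ⟨{σ⁻¹ x}, h, by simp⟩
  compl_mem := by
    intro A hA
    obtain ⟨C, hC, rfl⟩ := Finset.mem_image.mp hA
    refine Finset.mem_image.mpr ⟨Finset.univ \ C, T.compl_mem C hC, ?_⟩
    rw [Finset.image_sdiff _ _ σ.injective, Finset.image_univ_equiv]
  compat := by
    intro A hA B hB
    obtain ⟨C, hC, rfl⟩ := Finset.mem_image.mp hA
    obtain ⟨D, hD, rfl⟩ := Finset.mem_image.mp hB
    rcases T.compat C hC D hD with h | h | h | h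
    · exact Or.inl (Finset.image_subset_image h)
    · exact Or.inr (Or.inl (Finset.image_subset_image h))
    · refine Or.inr (Or.inr (Or.inl ?_))
      rw [← Finset.image_inter _ _ σ.injective, h, Finset.image_empty]
    · refine Or.inr (Or.inr (Or.inr ?_))
      rw [← Finset.image_union, h, Finset.image_univ_equiv]

noncomputable def UTree.permEquiv (σ : Equiv.Perm (Fin n)) : UTree n ≃ UTree n where
  toFun := UTree.permT σ
  invFun := UTree.permT σ⁻¹
  left_inv := fun T => UTree.splits_injective (permFam_inv σ T.splits)
  right_inv := fun T => UTree.splits_injective (by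
    have := permFam_inv σ⁻¹ T.splits
    rw [inv_inv] at this; exact this)

end PermAction

section UpDown
variable {n : ℕ}

/-- Lift a subset of `Fin n` to `Fin (n+1)` along `castSucc`. -/
noncomputable def up (C : Finset (Fin n)) : Finset (Fin (n + 1)) :=
  C.image Fin.castSucc

/-- Project a subset of `Fin (n+1)` back to `Fin n`. -/
noncomputable def down (A : Finset (Fin (n + 1))) : Finset (Fin n) :=
  A.preimage Fin.castSucc (Fin.castSucc_injective n).injOn

lemma mem_up {C : Finset (Fin n)} {y : Fin (n + 1)} :
    y ∈ up C ↔ ∃ x ∈ C, Fin.castSucc x = y := Finset.mem_image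

lemma mem_down {A : Finset (Fin (n + 1))} {x : Fin n} :
    x ∈ down A ↔ Fin.castSucc x ∈ A := Finset.mem_preimage

lemma last_not_mem_up (C : Finset (Fin n)) : Fin.last n ∉ up C := by
  intro h
  obtain ⟨x, _, hx⟩ := mem_up.mp h
  exact (Fin.castSucc_lt_last x).ne hx

lemma down_up (C : Finset (Fin n)) : down (up C) = C := by
  ext x
  simp only [mem_down, mem_up]
  constructor
  · rintro ⟨y, hy, h⟩
    rwa [← Fin.castSucc_injective n h]
  · intro hx; exact ⟨x, hx, rfl⟩

lemma up_down {A : Finset (Fin (n + 1))} (h : Fin.last n ∉ A) : up (down A) = A := by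
  ext y
  simp only [mem_up, mem_down]
  constructor
  · rintro ⟨x, hx, rfl⟩; exact hx
  · intro hy
    have hne : y ≠ Fin.last n := fun he => h (he ▸ hy)
    obtain ⟨x, hx⟩ := Fin.exists_castSucc_eq.mpr hne
    exact ⟨x, hx ▸ hy, hx⟩

lemma up_subset_up {C D : Finset (Fin n)} : up C ⊆ up D ↔ C ⊆ D :=
  Finset.image_subset_image_iff (Fin.castSucc_injective n)

lemma up_inter (C D : Finset (Fin n)) : up (C ∩ D) = up C ∩ up D :=
  Finset.image_inter _ _ (Fin.castSucc_injective n)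

lemma up_eq_empty {C : Finset (Fin n)} : up C = ∅ ↔ C = ∅ := Finset.image_eq_empty

lemma up_card (C : Finset (Fin n)) : (up C).card = C.card :=
  Finset.card_image_of_injective _ (Fin.castSucc_injective n)

lemma up_univ : up (Finset.univ : Finset (Fin n)) = Finset.univ \ {Fin.last n} := by
  ext y
  simp only [mem_up, Finset.mem_sdiff, Finset.mem_univ, true_and, Finset.mem_singleton]
  constructor
  · rintro ⟨x, _, rfl⟩; exact (Fin.castSucc_lt_last x).ne
  · intro hy
    obtain ⟨x, hx⟩ := Fin.exists_castSucc_eq.mpr hy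
    exact ⟨x, hx⟩

/-- The unrooted tree on `n+1` taxa obtained by attaching the extra taxon at the root. -/
noncomputable def toU (T : RTree n) : UTree (n + 1) where
  splits := T.clusters.image up ∪ T.clusters.image (fun C => Finset.univ \ up C)
  empty_not_mem := by
    intro h
    rcases Finset.mem_union.mp h with h | h
    · obtain ⟨C, hC, hCe⟩ := Finset.mem_image.mp h
      exact T.empty_not_mem (up_eq_empty.mp hCe ▸ hC)
    · obtain ⟨C, hC, hCe⟩ := Finset.mem_image.mp h
      have : Fin.last n ∈ Finset.univ \ up C := by
        simp [Finset.mem_sdiff, last_not_mem_up C]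
      rw [hCe] at this
      exact absurd this (Finset.notMem_empty _)
  trivial_mem := by
    intro x
    right
    by_cases hx : x = Fin.last n
    · subst hx
      refine Finset.mem_union_right _ (Finset.mem_image.mpr ⟨Finset.univ, T.univ_mem, ?_⟩)
      rw [up_univ, Finset.sdiff_sdiff_self_left, Finset.univ_inter]
    · obtain ⟨y, hy⟩ := Fin.exists_castSucc_eq.mpr hx
      refine Finset.mem_union_left _ (Finset.mem_image.mpr ⟨{y}, T.singleton_mem y, ?_⟩)
      rw [← hy]; rfl
  compl_mem := by
    intro A hA
    rcases Finset.mem_union.mp hA with h | h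
    · obtain ⟨C, hC, rfl⟩ := Finset.mem_image.mp h
      exact Finset.mem_union_right _ (Finset.mem_image.mpr ⟨C, hC, rfl⟩)
    · obtain ⟨C, hC, rfl⟩ := Finset.mem_image.mp h
      refine Finset.mem_union_left _ (Finset.mem_image.mpr ⟨C, hC, ?_⟩)
      rw [Finset.sdiff_sdiff_self_left, Finset.univ_inter]
  compat := by
    intro A hA B hB
    rcases Finset.mem_union.mp hA with h | h <;>
      rcases Finset.mem_union.mp hB with h' | h'
    · obtain ⟨C, hC, rfl⟩ := Finset.mem_image.mp h
      obtain ⟨D, hD, rfl⟩ := Finset.mem_image.mp h'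
      rcases T.laminar C hC D hD with hh | hh | hh
      · exact Or.inl (up_subset_up.mpr hh)
      · exact Or.inr (Or.inl (up_subset_up.mpr hh))
      · exact Or.inr (Or.inr (Or.inl (by rw [← up_inter, hh]; exact up_eq_empty.mpr rfl)))
    · obtain ⟨C, hC, rfl⟩ := Finset.mem_image.mp h
      obtain ⟨D, hD, rfl⟩ := Finset.mem_image.mp h'
      rcases T.laminar C hC D hD with hh | hh | hh
      · -- C ⊆ D : up C ∩ (univ \ up D) = ∅
        refine Or.inr (Or.inr (Or.inl ?_))
        have h1 : up C ⊆ up D := up_subset_up.mpr hh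
        ext y; simp only [Finset.mem_inter, Finset.mem_sdiff, Finset.mem_univ, true_and,
          Finset.notMem_empty, iff_false]
        rintro ⟨hy1, hy2⟩; exact hy2 (h1 hy1)
      · -- D ⊆ C : up C ∪ (univ \ up D) = univ
        refine Or.inr (Or.inr (Or.inr ?_))
        apply Finset.eq_univ_of_forall
        intro y
        by_cases hy : y ∈ up D
        · exact Finset.mem_union_left _ (up_subset_up.mpr hh hy)
        · exact Finset.mem_union_right _ (Finset.mem_sdiff.mpr ⟨Finset.mem_univ y, hy⟩)
      · -- C ∩ D = ∅ : up C ⊆ univ \ up D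
        refine Or.inl ?_
        intro y hy
        refine Finset.mem_sdiff.mpr ⟨Finset.mem_univ y, fun hy' => ?_⟩
        have : y ∈ up (C ∩ D) := (up_inter C D).symm ▸ Finset.mem_inter.mpr ⟨hy, hy'⟩
        rw [hh] at this
        exact absurd this (by simp [up_eq_empty.mpr rfl, Finset.notMem_empty])
    · obtain ⟨C, hC, rfl⟩ := Finset.mem_image.mp h
      obtain ⟨D, hD, rfl⟩ := Finset.mem_image.mp h'
      rcases T.laminar C hC D hD with hh | hh | hh
      · -- C ⊆ D : (univ \ up C) ∪ up D = univ
        refine Or.inr (Or.inr (Or.inr ?_))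
        apply Finset.eq_univ_of_forall
        intro y
        by_cases hy : y ∈ up C
        · exact Finset.mem_union_right _ (up_subset_up.mpr hh hy)
        · exact Finset.mem_union_left _ (Finset.mem_sdiff.mpr ⟨Finset.mem_univ y, hy⟩)
      · -- D ⊆ C : (univ \ up C) ∩ up D = ∅
        refine Or.inr (Or.inr (Or.inl ?_))
        have h1 : up D ⊆ up C := up_subset_up.mpr hh
        ext y; simp only [Finset.mem_inter, Finset.mem_sdiff, Finset.mem_univ, true_and,
          Finset.notMem_empty, iff_false]
        rintro ⟨hy1, hy2⟩; exact hy1 (h1 hy2)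
      · -- C ∩ D = ∅ : up D ⊆ univ \ up C
        refine Or.inr (Or.inl ?_)
        intro y hy
        refine Finset.mem_sdiff.mpr ⟨Finset.mem_univ y, fun hy' => ?_⟩
        have : y ∈ up (C ∩ D) := (up_inter C D).symm ▸ Finset.mem_inter.mpr ⟨hy', hy⟩
        rw [hh] at this
        exact absurd this (by simp [up_eq_empty.mpr rfl, Finset.notMem_empty])
    · obtain ⟨C, hC, rfl⟩ := Finset.mem_image.mp h
      obtain ⟨D, hD, rfl⟩ := Finset.mem_image.mp h'
      rcases T.laminar C hC D hD with hh | hh | hh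
      · exact Or.inr (Or.inl (Finset.sdiff_subset_sdiff (le_refl _) (up_subset_up.mpr hh)))
      · exact Or.inl (Finset.sdiff_subset_sdiff (le_refl _) (up_subset_up.mpr hh))
      · -- C ∩ D = ∅ : union of complements is univ
        refine Or.inr (Or.inr (Or.inr ?_))
        apply Finset.eq_univ_of_forall
        intro y
        by_cases hy : y ∈ up C
        · refine Finset.mem_union_right _ (Finset.mem_sdiff.mpr ⟨Finset.mem_univ y, fun hy' => ?_⟩)
          have : y ∈ up (C ∩ D) := (up_inter C D).symm ▸ Finset.mem_inter.mpr ⟨hy, hy'⟩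
          rw [hh] at this
          exact absurd this (by simp [up_eq_empty.mpr rfl, Finset.notMem_empty])
        · exact Finset.mem_union_left _ (Finset.mem_sdiff.mpr ⟨Finset.mem_univ y, hy⟩)

lemma toU_splits (T : RTree n) :
    (toU T).splits = T.clusters.image up ∪ T.clusters.image (fun C => Finset.univ \ up C) := rfl

lemma card_univ_fin_succ_ne_one (hn : 3 ≤ n) :
    ({Fin.last n} : Finset (Fin (n + 1))) ≠ Finset.univ := by
  intro h
  have := congrArg Finset.card h
  simp [Finset.card_univ] at this
  omega

/-- The rooted tree on `n` taxa obtained by removing the extra taxon. -/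
noncomputable def fromU (hn : 3 ≤ n) (T : UTree (n + 1)) : RTree n where
  clusters := (T.splits.filter (fun A => Fin.last n ∉ A)).image down
  univ_mem := by
    have h1 : ({Fin.last n} : Finset (Fin (n + 1))) ∈ T.splits := by
      rcases T.trivial_mem (Fin.last n) with h | h
      · exact absurd h (card_univ_fin_succ_ne_one hn)
      · exact h
    have h2 : Finset.univ \ ({Fin.last n} : Finset (Fin (n + 1))) ∈ T.splits :=
      T.compl_mem _ h1
    refine Finset.mem_image.mpr ⟨Finset.univ \ {Fin.last n}, Finset.mem_filter.mpr ⟨h2, by simp⟩, ?_⟩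
    rw [← up_univ, down_up]
  singleton_mem := by
    intro x
    have h1 : ({Fin.castSucc x} : Finset (Fin (n + 1))) ∈ T.splits := by
      rcases T.trivial_mem (Fin.castSucc x) with h | h
      · exfalso
        have := congrArg Finset.card h
        simp [Finset.card_univ] at this
        omega
      · exact h
    refine Finset.mem_image.mpr ⟨{Fin.castSucc x}, Finset.mem_filter.mpr ⟨h1, ?_⟩, ?_⟩
    · simp only [Finset.mem_singleton]
      exact fun he => (Fin.castSucc_lt_last x).ne he.symm
    · have : ({Fin.castSucc x} : Finset (Fin (n + 1))) = up {x} := by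
        simp [up]
      rw [this, down_up]
  empty_not_mem := by
    intro h
    obtain ⟨A, hA, hAe⟩ := Finset.mem_image.mp h
    obtain ⟨hAs, hAl⟩ := Finset.mem_filter.mp hA
    have : A = ∅ := by
      rw [← up_down hAl, hAe]
      exact up_eq_empty.mpr rfl
    exact T.empty_not_mem (this ▸ hAs)
  laminar := by
    intro C hC D hD
    obtain ⟨A, hA, rfl⟩ := Finset.mem_image.mp hC
    obtain ⟨B, hB, rfl⟩ := Finset.mem_image.mp hD
    obtain ⟨hAs, hAl⟩ := Finset.mem_filter.mp hA
    obtain ⟨hBs, hBl⟩ := Finset.mem_filter.mp hB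
    rcases T.compat A hAs B hBs with h | h | h | h
    · exact Or.inl (fun x hx => mem_down.mpr (h (mem_down.mp hx)))
    · exact Or.inr (Or.inl (fun x hx => mem_down.mpr (h (mem_down.mp hx))))
    · refine Or.inr (Or.inr ?_)
      ext x
      simp only [Finset.mem_inter, Finset.notMem_empty, iff_false]
      rintro ⟨hx1, hx2⟩
      have : Fin.castSucc x ∈ A ∩ B := Finset.mem_inter.mpr ⟨mem_down.mp hx1, mem_down.mp hx2⟩
      rw [h] at this
      exact absurd this (Finset.notMem_empty _)
    · exfalso
      have : Fin.last n ∈ A ∪ B := h ▸ Finset.mem_univ _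
      rcases Finset.mem_union.mp this with h' | h'
      · exact hAl h'
      · exact hBl h'

/-- The bijection between rooted trees on `n` taxa and unrooted trees on `n+1` taxa. -/
noncomputable def rtuEquiv (hn : 3 ≤ n) : RTree n ≃ UTree (n + 1) where
  toFun := toU
  invFun := fromU hn
  left_inv := by
    intro T
    apply RTree.clusters_injective
    show ((toU T).splits.filter (fun A => Fin.last n ∉ A)).image down = T.clusters
    have hfilter : (toU T).splits.filter (fun A => Fin.last n ∉ A) = T.clusters.image up := by
      ext A
      simp only [Finset.mem_filter, toU_splits, Finset.mem_union]
      constructor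
      · rintro ⟨h | h, hl⟩
        · exact h
        · obtain ⟨C, hC, rfl⟩ := Finset.mem_image.mp h
          exact absurd (Finset.mem_sdiff.mpr ⟨Finset.mem_univ _, last_not_mem_up C⟩) hl
      · intro h
        obtain ⟨C, hC, rfl⟩ := Finset.mem_image.mp h
        exact ⟨Or.inl h, last_not_mem_up C⟩
    rw [hfilter, Finset.image_image]
    have : (down ∘ up : Finset (Fin n) → Finset (Fin n)) = id := funext down_up
    rw [this, Finset.image_id]
  right_inv := by
    intro T
    apply UTree.splits_injective
    show (fromU hn T).clusters.image up ∪ (fromU hn T).clusters.image (fun C => Finset.univ \ up C)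
        = T.splits
    have hclus : (fromU hn T).clusters.image up = T.splits.filter (fun A => Fin.last n ∉ A) := by
      show ((T.splits.filter (fun A => Fin.last n ∉ A)).image down).image up = _
      rw [Finset.image_image]
      ext A
      simp only [Finset.mem_image, Function.comp]
      constructor
      · rintro ⟨B, hB, rfl⟩
        rwa [up_down (Finset.mem_filter.mp hB).2]
      · intro hA
        exact ⟨A, hA, up_down (Finset.mem_filter.mp hA).2⟩
    have hclus2 : (fromU hn T).clusters.image (fun C => Finset.univ \ up C)
        = (T.splits.filter (fun A => Fin.last n ∉ A)).image (fun A => Finset.univ \ A) := by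
      show ((T.splits.filter (fun A => Fin.last n ∉ A)).image down).image _ = _
      rw [Finset.image_image]
      apply Finset.image_congr
      intro A hA
      simp only [Function.comp]
      rw [up_down (Finset.mem_filter.mp hA).2]
    rw [hclus, hclus2]
    ext B
    simp only [Finset.mem_union, Finset.mem_filter, Finset.mem_image]
    constructor
    · rintro (⟨hB, _⟩ | ⟨A, ⟨hA, _⟩, rfl⟩)
      · exact hB
      · exact T.compl_mem A hA
    · intro hB
      by_cases hl : Fin.last n ∉ B
      · exact Or.inl ⟨hB, hl⟩
      · refine Or.inr ⟨Finset.univ \ B, ⟨T.compl_mem B hB, ?_⟩, ?_⟩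
        · intro hmem
          exact (Finset.mem_sdiff.mp hmem).2 (not_not.mp hl)
        · rw [Finset.sdiff_sdiff_self_left, Finset.univ_inter]

section Counting
variable {n : ℕ}

lemma filter_card_equiv {α β : Type*} [Fintype α] [Fintype β] (e : α ≃ β)
    (p : α → Prop) (q : β → Prop) [DecidablePred p] [DecidablePred q] (h : ∀ a, p a ↔ q (e a)) :
    (Finset.univ.filter p).card = (Finset.univ.filter q).card := by
  apply Finset.card_bij (fun a (_ : a ∈ Finset.univ.filter p) => e a)
  · intro a ha
    simp only [Finset.mem_filter, Finset.mem_univ, true_and] at ha ⊢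
    exact (h a).mp ha
  · intro a _ b _ hab
    exact e.injective hab
  · intro b hb
    simp only [Finset.mem_filter, Finset.mem_univ, true_and] at hb
    exact ⟨e.symm b, Finset.mem_filter.mpr ⟨Finset.mem_univ _, (h _).mpr (by simpa using hb)⟩,
      by simp⟩

lemma up_inter_Y (C t : Finset (Fin n)) :
    up C ∩ insert (Fin.last n) (up t) = up (C ∩ t) := by
  ext y
  simp only [Finset.mem_inter, Finset.mem_insert, up_inter]
  constructor
  · rintro ⟨h1, h2 | h2⟩
    · exact absurd (h2 ▸ h1) (last_not_mem_up C)
    · exact ⟨h1, h2⟩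
  · rintro ⟨h1, h2⟩
    exact ⟨h1, Or.inr h2⟩

lemma compl_inter_Y (C t : Finset (Fin n)) :
    (Finset.univ \ up C) ∩ insert (Fin.last n) (up t)
      = insert (Fin.last n) (up t) \ up (C ∩ t) := by
  ext y
  simp only [Finset.mem_inter, Finset.mem_sdiff, Finset.mem_univ, true_and]
  constructor
  · rintro ⟨h1, h2⟩
    exact ⟨h2, fun hc => h1 (up_subset_up.mpr Finset.inter_subset_left hc)⟩
  · rintro ⟨h1, h2⟩
    refine ⟨fun hC => ?_, h1⟩
    rcases Finset.mem_insert.mp h1 with rfl | hy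
    · exact last_not_mem_up C hC
    · exact h2 ((up_inter C t).symm ▸ Finset.mem_inter.mpr ⟨hC, hy⟩)

lemma resolved_toU (T : RTree n) (t : Finset (Fin n)) (ht : t.card = 3) :
    (toU T).Resolved (insert (Fin.last n) (up t)) ↔ famResolved T.clusters t := by
  have hYcard : (insert (Fin.last n) (up t)).card = 4 := by
    rw [Finset.card_insert_of_notMem (last_not_mem_up t), up_card, ht]
  constructor
  · rintro ⟨A, hA, hcard⟩
    rcases Finset.mem_union.mp hA with h | h
    · obtain ⟨C, hC, rfl⟩ := Finset.mem_image.mp h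
      refine ⟨C, hC, ?_⟩
      rwa [up_inter_Y, up_card] at hcard
    · obtain ⟨C, hC, rfl⟩ := Finset.mem_image.mp h
      refine ⟨C, hC, ?_⟩
      have hsub : up (C ∩ t) ⊆ insert (Fin.last n) (up t) :=
        (up_subset_up.mpr Finset.inter_subset_right).trans (Finset.subset_insert _ _)
      rw [compl_inter_Y, Finset.card_sdiff_of_subset hsub, hYcard, up_card] at hcard
      have hle : (C ∩ t).card ≤ 3 := le_trans (Finset.card_le_card Finset.inter_subset_right) ht.le
      omega
  · rintro ⟨C, hC, h2⟩
    exact ⟨up C, Finset.mem_union_left _ (Finset.mem_image_of_mem _ hC),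
      by rw [up_inter_Y, up_card]; exact h2⟩

lemma count_resolved_transfer (hn : 3 ≤ n) (t : Finset (Fin n)) (ht : t.card = 3) :
    (Finset.univ.filter fun T : RTree n => famResolved T.clusters t).card
      = (Finset.univ.filter fun T' : UTree (n + 1) =>
          T'.Resolved (insert (Fin.last n) (up t))).card := by
  exact filter_card_equiv (rtuEquiv hn) _ _ (fun T => (resolved_toU T t ht).symm)

lemma subtypeCongr_left {α : Type*} {p q : α → Prop} [DecidablePred p] [DecidablePred q]
    (e : {x // p x} ≃ {x // q x}) (f : {x // ¬p x} ≃ {x // ¬q x}) {a : α} (h : p a) :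
    Equiv.subtypeCongr e f a = (e ⟨a, h⟩ : {x // q x}) := by
  simp [Equiv.subtypeCongr, h]

lemma exists_perm_image_s1 {m : ℕ} (s t : Finset (Fin m)) (h : s.card = t.card) :
    ∃ σ : Equiv.Perm (Fin m), s.image σ = t := by
  classical
  have h1 : Fintype.card {x // x ∈ s} = Fintype.card {x // x ∈ t} := by
    rw [Fintype.card_coe, Fintype.card_coe, h]
  have h2 : Fintype.card {x // ¬ x ∈ s} = Fintype.card {x // ¬ x ∈ t} := by
    rw [Fintype.card_subtype_compl, Fintype.card_subtype_compl, h1]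
  let e1 := Fintype.equivOfCardEq h1
  let e2 := Fintype.equivOfCardEq h2
  refine ⟨Equiv.subtypeCongr e1 e2, ?_⟩
  ext y
  simp only [Finset.mem_image]
  constructor
  · rintro ⟨x, hx, rfl⟩
    rw [subtypeCongr_left e1 e2 hx]
    exact (e1 ⟨x, hx⟩).2
  · intro hy
    refine ⟨(e1.symm ⟨y, hy⟩ : {x // x ∈ s}).1, (e1.symm ⟨y, hy⟩).2, ?_⟩
    rw [subtypeCongr_left e1 e2 (e1.symm ⟨y, hy⟩).2, Subtype.coe_eta, Equiv.apply_symm_apply]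

lemma count_resolved_perm {m : ℕ} (σ : Equiv.Perm (Fin m)) (Y : Finset (Fin m)) :
    (Finset.univ.filter fun T : UTree m => T.Resolved Y).card
      = (Finset.univ.filter fun T : UTree m => T.Resolved (Y.image σ)).card := by
  apply filter_card_equiv (UTree.permEquiv σ)
  intro T
  exact (famResolved_permFam σ T.splits Y).symm

lemma uResProb_eq_of_card {m : ℕ} (X Y : Finset (Fin m)) (h : X.card = Y.card) :
    uResProb m X = uResProb m Y := by
  obtain ⟨σ, hσ⟩ := exists_perm_image_s1 Y X h.symm
  unfold uResProb
  rw [← hσ, ← count_resolved_perm]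

lemma uResProb_eq_resolved_ratio (hn : 3 ≤ n) (X : Finset (Fin (n + 1))) (hX : X.card = 4)
    (t : Finset (Fin n)) (ht : t.card = 3) :
    uResProb (n + 1) X =
      ((Finset.univ.filter fun T : RTree n => famResolved T.clusters t).card : ℝ) /
        (Fintype.card (RTree n) : ℝ) := by
  have hY : (insert (Fin.last n) (up t)).card = 4 := by
    rw [Finset.card_insert_of_notMem (last_not_mem_up t), up_card, ht]
  rw [uResProb_eq_of_card X _ (hX.trans hY.symm)]
  unfold uResProb
  rw [← count_resolved_transfer hn t ht, Fintype.card_congr (rtuEquiv hn).symm]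

end Counting

section Pairs
variable {n : ℕ}

lemma pair_unique (T : RTree n) {t C D : Finset (Fin n)} (ht : t.card = 3)
    (hC : C ∈ T.clusters) (hD : D ∈ T.clusters)
    (hC2 : (C ∩ t).card = 2) (hD2 : (D ∩ t).card = 2) : C ∩ t = D ∩ t := by
  rcases T.laminar C hC D hD with h | h | h
  · exact Finset.eq_of_subset_of_card_le
      (Finset.inter_subset_inter h (subset_refl t)) (by omega)
  · exact (Finset.eq_of_subset_of_card_le
      (Finset.inter_subset_inter h (subset_refl t)) (by omega)).symm
  · exfalso
    have hdisj : Disjoint (C ∩ t) (D ∩ t) := by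
      rw [Finset.disjoint_left]
      intro x hx1 hx2
      have : x ∈ C ∩ D := Finset.mem_inter.mpr
        ⟨(Finset.mem_inter.mp hx1).1, (Finset.mem_inter.mp hx2).1⟩
      rw [h] at this
      exact absurd this (Finset.notMem_empty x)
    have hsub : (C ∩ t) ∪ (D ∩ t) ⊆ t :=
      Finset.union_subset Finset.inter_subset_right Finset.inter_subset_right
    have hcard := Finset.card_le_card hsub
    rw [Finset.card_union_of_disjoint hdisj, hC2, hD2, ht] at hcard
    omega

lemma famRestrict_eq_of_pair (T : RTree n) {t P : Finset (Fin n)} (ht : t.card = 3)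
    (hP : ∃ C ∈ T.clusters, C ∩ t = P) (hP2 : P.card = 2) :
    famRestrict T.clusters t
      = insert t (insert P (t.image fun x => ({x} : Finset (Fin n)))) := by
  obtain ⟨CP, hCP, hCPt⟩ := hP
  ext A
  simp only [famRestrict, Finset.mem_filter, Finset.mem_image, Finset.mem_insert]
  constructor
  · rintro ⟨⟨C, hC, rfl⟩, hne⟩
    have hsub : C ∩ t ⊆ t := Finset.inter_subset_right
    have hle : (C ∩ t).card ≤ 3 := ht ▸ Finset.card_le_card hsub
    have hpos : 0 < (C ∩ t).card :=
      Finset.card_pos.mpr (Finset.nonempty_of_ne_empty hne)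
    have hcases : (C ∩ t).card = 1 ∨ (C ∩ t).card = 2 ∨ (C ∩ t).card = 3 := by omega
    rcases hcases with h | h | h
    · right; right
      obtain ⟨x, hx⟩ := Finset.card_eq_one.mp h
      exact ⟨x, hsub (hx ▸ Finset.mem_singleton_self x), hx.symm⟩
    · right; left
      rw [← hCPt]
      exact pair_unique T ht hC hCP h (hCPt ▸ hP2)
    · left
      exact Finset.eq_of_subset_of_card_le hsub (by omega)
  · rintro (rfl | rfl | ⟨x, hx, rfl⟩)
    · refine ⟨⟨Finset.univ, T.univ_mem, Finset.univ_inter A⟩, ?_⟩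
      intro h; rw [h] at ht; simp at ht
    · refine ⟨⟨CP, hCP, hCPt⟩, ?_⟩
      intro h; rw [h] at hP2; simp at hP2
    · exact ⟨⟨{x}, T.singleton_mem x, Finset.singleton_inter_of_mem hx⟩,
        Finset.singleton_ne_empty x⟩

lemma restrict_eq_iff (T₁ T₂ : RTree n) {t C₁ C₂ : Finset (Fin n)} (ht : t.card = 3)
    (h1 : C₁ ∈ T₁.clusters) (h2 : C₂ ∈ T₂.clusters)
    (hc1 : (C₁ ∩ t).card = 2) (hc2 : (C₂ ∩ t).card = 2) :
    famRestrict T₁.clusters t = famRestrict T₂.clusters t ↔ C₁ ∩ t = C₂ ∩ t := by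
  constructor
  · intro h
    have hmem : C₁ ∩ t ∈ famRestrict T₂.clusters t := by
      rw [← h]
      refine Finset.mem_filter.mpr ⟨Finset.mem_image.mpr ⟨C₁, h1, rfl⟩, ?_⟩
      intro he; rw [he] at hc1; simp at hc1
    obtain ⟨hmem', _⟩ := Finset.mem_filter.mp hmem
    obtain ⟨D, hD, hDe⟩ := Finset.mem_image.mp hmem'
    rw [← hDe]
    exact pair_unique T₂ ht hD h2 (by rw [hDe]; exact hc1) hc2
  · intro h
    rw [famRestrict_eq_of_pair T₁ ht ⟨C₁, h1, rfl⟩ hc1,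
      famRestrict_eq_of_pair T₂ ht ⟨C₂, h2, rfl⟩ hc2, h]

/-- Trees containing a cluster whose trace on `t` is exactly `P`. -/
noncomputable def classSet (t P : Finset (Fin n)) : Finset (RTree n) :=
  Finset.univ.filter fun T => ∃ C ∈ T.clusters, C ∩ t = P

/-- Trees in which the triplet `t` is resolved. -/
noncomputable def resSet (t : Finset (Fin n)) : Finset (RTree n) :=
  Finset.univ.filter fun T => famResolved T.clusters t

lemma image_swap_self {c c' : Fin n} {t : Finset (Fin n)} (hc : c ∈ t) (hc' : c' ∈ t) :
    t.image (Equiv.swap c c') = t := by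
  apply Finset.eq_of_subset_of_card_le
  · intro y hy
    obtain ⟨x, hx, rfl⟩ := Finset.mem_image.mp hy
    rcases eq_or_ne x c with rfl | h1
    · rwa [Equiv.swap_apply_left]
    rcases eq_or_ne x c' with rfl | h2
    · rwa [Equiv.swap_apply_right]
    · rwa [Equiv.swap_apply_of_ne_of_ne h1 h2]
  · rw [Finset.card_image_of_injective _ (Equiv.swap c c').injective]

lemma classSet_card_eq (t : Finset (Fin n)) (ht : t.card = 3)
    {P Q : Finset (Fin n)} (hP : P ∈ Finset.powersetCard 2 t)
    (hQ : Q ∈ Finset.powersetCard 2 t) :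
    (classSet t P).card = (classSet t Q).card := by
  obtain ⟨hPt, hP2⟩ := Finset.mem_powersetCard.mp hP
  obtain ⟨hQt, hQ2⟩ := Finset.mem_powersetCard.mp hQ
  have hcP : (t \ P).card = 1 := by rw [Finset.card_sdiff_of_subset hPt, ht, hP2]
  have hcQ : (t \ Q).card = 1 := by rw [Finset.card_sdiff_of_subset hQt, ht, hQ2]
  obtain ⟨c, hc⟩ := Finset.card_eq_one.mp hcP
  obtain ⟨c', hc'⟩ := Finset.card_eq_one.mp hcQ
  have hct : c ∈ t := (Finset.sdiff_subset) (hc ▸ Finset.mem_singleton_self c)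
  have hct' : c' ∈ t := (Finset.sdiff_subset) (hc' ▸ Finset.mem_singleton_self c')
  have hPeq : P = t \ {c} := by
    rw [← hc, Finset.sdiff_sdiff_self_left, Finset.inter_eq_right.mpr hPt]
  have hQeq : Q = t \ {c'} := by
    rw [← hc', Finset.sdiff_sdiff_self_left, Finset.inter_eq_right.mpr hQt]
  set σ := Equiv.swap c c' with hσ
  have himt : t.image σ = t := image_swap_self hct hct'
  have himP : P.image σ = Q := by
    rw [hPeq, Finset.image_sdiff _ _ σ.injective, himt, hQeq]
    congr 1
    rw [Finset.image_singleton]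
    congr 1
    exact Equiv.swap_apply_left c c'
  unfold classSet
  apply filter_card_equiv (RTree.permEquiv σ)
  intro T
  have := exists_inter_eq_perm σ T.clusters t P
  rw [himt, himP] at this
  exact this.symm

lemma classSet_subset_resSet {t P : Finset (Fin n)} (hP2 : P.card = 2) :
    classSet t P ⊆ resSet t := by
  intro T hT
  obtain ⟨_, C, hC, hCe⟩ := Finset.mem_filter.mp hT
  exact Finset.mem_filter.mpr ⟨Finset.mem_univ T, C, hC, hCe ▸ hP2⟩

lemma resSet_card_eq_s1 (t : Finset (Fin n)) (ht : t.card = 3)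
    {P : Finset (Fin n)} (hP : P ∈ Finset.powersetCard 2 t) :
    (resSet t).card = 3 * (classSet t P).card := by
  have hbi : resSet t = (Finset.powersetCard 2 t).biUnion (classSet t) := by
    ext T
    simp only [resSet, classSet, Finset.mem_filter, Finset.mem_biUnion, Finset.mem_univ, true_and]
    constructor
    · rintro ⟨C, hC, h2⟩
      exact ⟨C ∩ t, Finset.mem_powersetCard.mpr ⟨Finset.inter_subset_right, h2⟩, C, hC, rfl⟩
    · rintro ⟨Q, hQ, C, hC, rfl⟩
      exact ⟨C, hC, (Finset.mem_powersetCard.mp hQ).2⟩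
  rw [hbi, Finset.card_biUnion]
  · rw [Finset.sum_congr rfl (fun Q hQ => classSet_card_eq t ht hQ hP),
      Finset.sum_const, Finset.card_powersetCard, ht]
    simp [Nat.choose]
  · intro P1 hP1 P2 hP2' hne
    rw [Function.onFun, Finset.disjoint_left]
    intro T hT1 hT2
    obtain ⟨_, C, hC, hCe⟩ := Finset.mem_filter.mp hT1
    obtain ⟨_, D, hD, hDe⟩ := Finset.mem_filter.mp hT2
    apply hne
    rw [← hCe, ← hDe]
    exact pair_unique T ht hC hD (hCe ▸ (Finset.mem_powersetCard.mp hP1).2)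
      (hDe ▸ (Finset.mem_powersetCard.mp hP2').2)

/-- The star tree, witnessing nonemptiness of `RTree n`. -/
noncomputable def starTree (n : ℕ) (hn : 0 < n) : RTree n where
  clusters := insert Finset.univ (Finset.univ.image fun x : Fin n => ({x} : Finset (Fin n)))
  univ_mem := Finset.mem_insert_self _ _
  singleton_mem := fun x =>
    Finset.mem_insert_of_mem (Finset.mem_image_of_mem _ (Finset.mem_univ x))
  empty_not_mem := by
    intro h
    rcases Finset.mem_insert.mp h with h | h
    · have hne : (Finset.univ : Finset (Fin n)).Nonempty := ⟨⟨0, hn⟩, Finset.mem_univ _⟩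
      rw [← h] at hne
      exact Finset.not_nonempty_empty hne
    · obtain ⟨x, _, hx⟩ := Finset.mem_image.mp h
      exact Finset.singleton_ne_empty x hx
  laminar := by
    intro C hC D hD
    rcases Finset.mem_insert.mp hC with rfl | hC
    · exact Or.inr (Or.inl (Finset.subset_univ D))
    rcases Finset.mem_insert.mp hD with rfl | hD
    · exact Or.inl (Finset.subset_univ C)
    obtain ⟨x, _, rfl⟩ := Finset.mem_image.mp hC
    obtain ⟨y, _, rfl⟩ := Finset.mem_image.mp hD
    rcases eq_or_ne x y with rfl | hxy
    · exact Or.inl (subset_refl _)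
    · refine Or.inr (Or.inr ?_)
      rw [Finset.singleton_inter_of_notMem (by simp [hxy])]

end Pairs

section MainCount
variable {n : ℕ}

lemma per_triplet_sum (hn : 3 ≤ n) (p : ℝ) (X : Finset (Fin (n + 1))) (hX : X.card = 4)
    (t : Finset (Fin n)) (ht : t.card = 3) :
    (∑ T₁ : RTree n, ∑ T₂ : RTree n,
      ((if famResolved T₁.clusters t ∧ famResolved T₂.clusters t ∧
            famRestrict T₁.clusters t ≠ famRestrict T₂.clusters t then (1:ℝ) else 0) +
        p * ((if famResolved T₁.clusters t ∧ ¬ famResolved T₂.clusters t then (1:ℝ) else 0) +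
             (if famResolved T₂.clusters t ∧ ¬ famResolved T₁.clusters t then (1:ℝ) else 0))))
      = (Fintype.card (RTree n) : ℝ) ^ 2 *
          (2 / 3 * uResProb (n + 1) X ^ 2 +
            2 * p * uResProb (n + 1) X * (1 - uResProb (n + 1) X)) := by
  set N := Fintype.card (RTree n) with hN
  have hNpos : 0 < N := Fintype.card_pos_iff.mpr ⟨starTree n (by omega)⟩
  obtain ⟨Psel, hPsel⟩ : (Finset.powersetCard 2 t).Nonempty := by
    rw [← Finset.card_pos, Finset.card_powersetCard, ht]
    norm_num [Nat.choose]
  set k := (classSet t Psel).card with hk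
  have ha : (resSet t).card = 3 * k := resSet_card_eq_s1 t ht hPsel
  have hkr : k ≤ (resSet t).card := by omega
  have haN : (resSet t).card ≤ N := by
    rw [hN, ← Finset.card_univ]
    exact Finset.card_le_card (Finset.filter_subset _ _)
  have hrprob : uResProb (n + 1) X = ((resSet t).card : ℝ) / (N : ℝ) :=
    uResProb_eq_resolved_ratio hn X hX t ht
  -- the three inner sums over T₂
  have hDinner : ∀ T₁ : RTree n,
      (∑ T₂ : RTree n, (if famResolved T₁.clusters t ∧ famResolved T₂.clusters t ∧
          famRestrict T₁.clusters t ≠ famRestrict T₂.clusters t then (1:ℝ) else 0))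
        = if famResolved T₁.clusters t then ((resSet t).card : ℝ) - (k : ℝ) else 0 := by
    intro T₁
    rw [Finset.sum_boole]
    by_cases h1 : famResolved T₁.clusters t
    · rw [if_pos h1]
      obtain ⟨C₁, hC₁, hC₁2⟩ := h1
      have hP1mem : C₁ ∩ t ∈ Finset.powersetCard 2 t :=
        Finset.mem_powersetCard.mpr ⟨Finset.inter_subset_right, hC₁2⟩
      have hfil : (Finset.univ.filter fun T₂ : RTree n =>
          famResolved T₁.clusters t ∧ famResolved T₂.clusters t ∧
            famRestrict T₁.clusters t ≠ famRestrict T₂.clusters t)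
          = resSet t \ classSet t (C₁ ∩ t) := by
        ext T₂
        simp only [Finset.mem_filter, Finset.mem_univ, true_and, Finset.mem_sdiff]
        constructor
        · rintro ⟨_, h2, hne⟩
          constructor
          · exact Finset.mem_filter.mpr ⟨Finset.mem_univ _, h2⟩
          · intro hcl
            obtain ⟨_, D, hD, hDe⟩ := Finset.mem_filter.mp hcl
            exact hne ((restrict_eq_iff T₁ T₂ ht hC₁ hD hC₁2
              (by rw [hDe]; exact hC₁2)).mpr hDe.symm)
        · rintro ⟨hres, hncl⟩
          have h2 := (Finset.mem_filter.mp hres).2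
          refine ⟨⟨C₁, hC₁, hC₁2⟩, h2, ?_⟩
          intro heq
          obtain ⟨C₂, hC₂, hC₂2⟩ := h2
          have hce := (restrict_eq_iff T₁ T₂ ht hC₁ hC₂ hC₁2 hC₂2).mp heq
          exact hncl (Finset.mem_filter.mpr ⟨Finset.mem_univ _, C₂, hC₂, hce.symm⟩)
      rw [hfil, Finset.card_sdiff_of_subset (classSet_subset_resSet hC₁2),
        classSet_card_eq t ht hP1mem hPsel, Nat.cast_sub hkr]
    · rw [if_neg h1]
      have : (Finset.univ.filter fun T₂ : RTree n =>
          famResolved T₁.clusters t ∧ famResolved T₂.clusters t ∧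
            famRestrict T₁.clusters t ≠ famRestrict T₂.clusters t) = ∅ :=
        Finset.filter_false_of_mem (fun T₂ _ hc => h1 hc.1)
      rw [this, Finset.card_empty, Nat.cast_zero]
  have hR1inner : ∀ T₁ : RTree n,
      (∑ T₂ : RTree n, (if famResolved T₁.clusters t ∧ ¬ famResolved T₂.clusters t
          then (1:ℝ) else 0))
        = if famResolved T₁.clusters t then (N : ℝ) - ((resSet t).card : ℝ) else 0 := by
    intro T₁
    rw [Finset.sum_boole]
    by_cases h1 : famResolved T₁.clusters t
    · rw [if_pos h1]
      have hfil : (Finset.univ.filter fun T₂ : RTree n =>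
          famResolved T₁.clusters t ∧ ¬ famResolved T₂.clusters t)
          = Finset.univ \ resSet t := by
        ext T₂
        simp only [Finset.mem_filter, Finset.mem_univ, true_and, Finset.mem_sdiff, resSet]
        tauto
      rw [hfil, Finset.card_sdiff_of_subset (Finset.subset_univ _), Finset.card_univ, ← hN,
        Nat.cast_sub haN]
    · rw [if_neg h1]
      have : (Finset.univ.filter fun T₂ : RTree n =>
          famResolved T₁.clusters t ∧ ¬ famResolved T₂.clusters t) = ∅ :=
        Finset.filter_false_of_mem (fun T₂ _ hc => h1 hc.1)
      rw [this, Finset.card_empty, Nat.cast_zero]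
  have hR2inner : ∀ T₁ : RTree n,
      (∑ T₂ : RTree n, (if famResolved T₂.clusters t ∧ ¬ famResolved T₁.clusters t
          then (1:ℝ) else 0))
        = if famResolved T₁.clusters t then 0 else ((resSet t).card : ℝ) := by
    intro T₁
    rw [Finset.sum_boole]
    by_cases h1 : famResolved T₁.clusters t
    · rw [if_pos h1]
      have : (Finset.univ.filter fun T₂ : RTree n =>
          famResolved T₂.clusters t ∧ ¬ famResolved T₁.clusters t) = ∅ :=
        Finset.filter_false_of_mem (fun T₂ _ hc => hc.2 h1)
      rw [this, Finset.card_empty, Nat.cast_zero]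
    · rw [if_neg h1]
      have : (Finset.univ.filter fun T₂ : RTree n =>
          famResolved T₂.clusters t ∧ ¬ famResolved T₁.clusters t) = resSet t := by
        ext T₂
        simp only [Finset.mem_filter, Finset.mem_univ, true_and, resSet]
        tauto
      rw [this]
  -- collapse the outer sum
  have hout : ∀ T₁ : RTree n,
      (∑ T₂ : RTree n,
        ((if famResolved T₁.clusters t ∧ famResolved T₂.clusters t ∧
              famRestrict T₁.clusters t ≠ famRestrict T₂.clusters t then (1:ℝ) else 0) +
          p * ((if famResolved T₁.clusters t ∧ ¬ famResolved T₂.clusters t then (1:ℝ) else 0) +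
               (if famResolved T₂.clusters t ∧ ¬ famResolved T₁.clusters t then (1:ℝ) else 0))))
      = if famResolved T₁.clusters t
          then (((resSet t).card : ℝ) - (k : ℝ)) + p * ((N : ℝ) - ((resSet t).card : ℝ))
          else p * ((resSet t).card : ℝ) := by
    intro T₁
    rw [Finset.sum_add_distrib, ← Finset.mul_sum, Finset.sum_add_distrib,
      hDinner T₁, hR1inner T₁, hR2inner T₁]
    by_cases h1 : famResolved T₁.clusters t <;> simp [h1]
  rw [Finset.sum_congr rfl (fun T₁ _ => hout T₁), Finset.sum_ite, Finset.sum_const,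
    Finset.sum_const, nsmul_eq_mul, nsmul_eq_mul]
  have hfilres : (Finset.univ.filter fun T₁ : RTree n => famResolved T₁.clusters t)
      = resSet t := rfl
  have hfilnres : (Finset.univ.filter fun T₁ : RTree n => ¬ famResolved T₁.clusters t).card
      = N - (resSet t).card := by
    rw [Finset.filter_not, Finset.card_sdiff_of_subset (Finset.filter_subset _ _), Finset.card_univ, ← hN]
    rfl
  rw [hfilres, hfilnres, Nat.cast_sub haN]
  -- now pure algebra
  have haR : ((resSet t).card : ℝ) = 3 * (k : ℝ) := by exact_mod_cast ha
  have hNne : (N : ℝ) ≠ 0 := Nat.cast_ne_zero.mpr hNpos.ne'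
  rw [hrprob, haR]
  field_simp
  ring
end MainCount

/-- **Theorem (expected parametric triplet distance, via quartet probabilities).** -/
theorem expected_parametric_triplet_distance (n : ℕ) (hn : 3 ≤ n)
    (p : ℝ) (hp0 : 0 ≤ p) (hp1 : p ≤ 1)
    (X : Finset (Fin (n + 1))) (hX : X.card = 4) :
    (∑ T₁ : RTree n, ∑ T₂ : RTree n, RTree.pdist p T₁ T₂) /
        (Fintype.card (RTree n) : ℝ) ^ 2 =
      (n.choose 3 : ℝ) *
        (2 / 3 * uResProb (n + 1) X ^ 2 +
          2 * p * uResProb (n + 1) X * (1 - uResProb (n + 1) X)) := by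
  have hexp : ∀ T₁ T₂ : RTree n, RTree.pdist p T₁ T₂ =
      ∑ t ∈ triplets n,
        ((if famResolved T₁.clusters t ∧ famResolved T₂.clusters t ∧
              famRestrict T₁.clusters t ≠ famRestrict T₂.clusters t then (1:ℝ) else 0) +
          p * ((if famResolved T₁.clusters t ∧ ¬ famResolved T₂.clusters t then (1:ℝ) else 0) +
               (if famResolved T₂.clusters t ∧ ¬ famResolved T₁.clusters t then (1:ℝ) else 0))) := by
    intro T₁ T₂
    have h1 : ((famSetD T₁.clusters T₂.clusters).card : ℝ)
        = ∑ t ∈ triplets n, (if famResolved T₁.clusters t ∧ famResolved T₂.clusters t ∧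
            famRestrict T₁.clusters t ≠ famRestrict T₂.clusters t then (1:ℝ) else 0) :=
      (Finset.sum_boole _ _).symm
    have h2 : ((famSetR1 T₁.clusters T₂.clusters).card : ℝ)
        = ∑ t ∈ triplets n, (if famResolved T₁.clusters t ∧ ¬ famResolved T₂.clusters t
            then (1:ℝ) else 0) :=
      (Finset.sum_boole _ _).symm
    have h3 : ((famSetR2 T₁.clusters T₂.clusters).card : ℝ)
        = ∑ t ∈ triplets n, (if famResolved T₂.clusters t ∧ ¬ famResolved T₁.clusters t
            then (1:ℝ) else 0) :=
      (Finset.sum_boole _ _).symm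
    rw [RTree.pdist, famPdist, h1, h2, h3, ← Finset.sum_add_distrib, Finset.mul_sum,
      ← Finset.sum_add_distrib]
  have hnum : (∑ T₁ : RTree n, ∑ T₂ : RTree n, RTree.pdist p T₁ T₂)
      = (n.choose 3 : ℝ) * ((Fintype.card (RTree n) : ℝ) ^ 2 *
          (2 / 3 * uResProb (n + 1) X ^ 2 +
            2 * p * uResProb (n + 1) X * (1 - uResProb (n + 1) X))) := by
    calc (∑ T₁ : RTree n, ∑ T₂ : RTree n, RTree.pdist p T₁ T₂)
        = ∑ T₁ : RTree n, ∑ T₂ : RTree n, ∑ t ∈ triplets n,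
            ((if famResolved T₁.clusters t ∧ famResolved T₂.clusters t ∧
                  famRestrict T₁.clusters t ≠ famRestrict T₂.clusters t then (1:ℝ) else 0) +
              p * ((if famResolved T₁.clusters t ∧ ¬ famResolved T₂.clusters t
                      then (1:ℝ) else 0) +
                   (if famResolved T₂.clusters t ∧ ¬ famResolved T₁.clusters t
                      then (1:ℝ) else 0))) :=
          Finset.sum_congr rfl (fun T₁ _ => Finset.sum_congr rfl (fun T₂ _ => hexp T₁ T₂))
      _ = ∑ T₁ : RTree n, ∑ t ∈ triplets n, ∑ T₂ : RTree n, _ :=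
          Finset.sum_congr rfl (fun T₁ _ => Finset.sum_comm)
      _ = ∑ t ∈ triplets n, ∑ T₁ : RTree n, ∑ T₂ : RTree n, _ := Finset.sum_comm
      _ = ∑ t ∈ triplets n, ((Fintype.card (RTree n) : ℝ) ^ 2 *
            (2 / 3 * uResProb (n + 1) X ^ 2 +
              2 * p * uResProb (n + 1) X * (1 - uResProb (n + 1) X))) :=
          Finset.sum_congr rfl (fun t ht' => per_triplet_sum hn p X hX t
            (Finset.mem_powersetCard.mp ht').2)
      _ = (n.choose 3 : ℝ) * ((Fintype.card (RTree n) : ℝ) ^ 2 *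
            (2 / 3 * uResProb (n + 1) X ^ 2 +
              2 * p * uResProb (n + 1) X * (1 - uResProb (n + 1) X))) := by
          rw [Finset.sum_const, nsmul_eq_mul]
          congr 1
          rw [triplets, Finset.card_powersetCard, Finset.card_univ, Fintype.card_fin]
  have hNpos : (0:ℝ) < (Fintype.card (RTree n) : ℝ) := by
    exact_mod_cast Fintype.card_pos_iff.mpr ⟨starTree n (by omega)⟩
  rw [hnum]
  field_simp
end UpDown
end

section
/- For all n ≥ 1, r'(n) = r(n+1) and u'(n) = u(n+1): the probability that a fixed triplet is resolved (respectively unresolved) in a uniformly random rooted phylogeny over [n] equals the probability that a fixed quartet is resolved (respectively unresolved) in a uniformly random unrooted phylogeny over [n+1]. -/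
open Finset

attribute [local instance] Classical.propDecidable

/-- `r'(n)` : the probability that the fixed triplet `X` is resolved in a rooted
phylogeny chosen uniformly at random from `RP(n)`.  (By symmetry this does not
depend on the choice of the triplet `X`.) -/
noncomputable def rResProb (n : ℕ) (X : Finset (Fin n)) : ℝ :=
  ((Finset.univ.filter fun T : RTree n => T.Resolved X).card : ℝ) /
    (Fintype.card (RTree n) : ℝ)

namespace TQAux

variable {n : ℕ}

def up (C : Finset (Fin n)) : Finset (Fin (n + 1)) := C.image Fin.castSucc

lemma castSucc_mem_up {C : Finset (Fin n)} {y : Fin n} :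
    Fin.castSucc y ∈ up C ↔ y ∈ C := by
  simp [up, (Fin.castSucc_injective n).eq_iff]

lemma last_not_mem_up {C : Finset (Fin n)} : Fin.last n ∉ up C := by
  simp only [up, Finset.mem_image]
  rintro ⟨y, _, h⟩
  exact absurd h (Fin.castSucc_lt_last y).ne

def down (A : Finset (Fin (n + 1))) : Finset (Fin n) :=
  Finset.univ.filter (fun y => Fin.castSucc y ∈ A)

lemma mem_down {A : Finset (Fin (n + 1))} {x : Fin n} :
    x ∈ down A ↔ Fin.castSucc x ∈ A := by simp [down]

lemma down_up (C : Finset (Fin n)) : down (up C) = C := by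
  ext x; rw [mem_down, castSucc_mem_up]

lemma up_down {A : Finset (Fin (n + 1))} (h : Fin.last n ∉ A) : up (down A) = A := by
  ext x
  rcases Fin.eq_castSucc_or_eq_last x with ⟨j, rfl⟩ | rfl
  · rw [castSucc_mem_up, mem_down]
  · simp [last_not_mem_up, h]

lemma up_inter (C D : Finset (Fin n)) : up (C ∩ D) = up C ∩ up D :=
  Finset.image_inter _ _ (Fin.castSucc_injective n)

lemma card_up (C : Finset (Fin n)) : (up C).card = C.card :=
  Finset.card_image_of_injective _ (Fin.castSucc_injective n)

lemma up_empty_iff {C : Finset (Fin n)} : up C = ∅ ↔ C = ∅ := by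
  simp [up]

lemma up_subset {C D : Finset (Fin n)} (h : C ⊆ D) : up C ⊆ up D :=
  Finset.image_subset_image h

lemma up_subset_iff {C D : Finset (Fin n)} : up C ⊆ up D ↔ C ⊆ D := by
  constructor
  · intro h x hx
    have := h (castSucc_mem_up.mpr hx)
    exact castSucc_mem_up.mp this
  · exact up_subset


section TreeBij

variable {n : ℕ}

/-- Forward map: rooted tree on `n` leaves to unrooted tree on `n+1` leaves. -/
def fwd (T : RTree n) : UTree (n + 1) where
  splits := T.clusters.image up ∪ T.clusters.image (fun C => Finset.univ \ up C)
  empty_not_mem := by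
    simp only [Finset.mem_union, Finset.mem_image]
    rintro (⟨C, hC, hE⟩ | ⟨C, hC, hE⟩)
    · exact T.empty_not_mem (up_empty_iff.mp hE ▸ hC)
    · have : Fin.last n ∈ Finset.univ \ up C := by
        simp [last_not_mem_up]
      rw [hE] at this
      exact absurd this (Finset.notMem_empty _)
  trivial_mem := by
    intro x
    right
    rcases Fin.eq_castSucc_or_eq_last x with ⟨j, rfl⟩ | rfl
    · apply Finset.mem_union_left
      refine Finset.mem_image.mpr ⟨{j}, T.singleton_mem j, ?_⟩
      simp [up]
    · apply Finset.mem_union_right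
      refine Finset.mem_image.mpr ⟨Finset.univ, T.univ_mem, ?_⟩
      ext z
      rcases Fin.eq_castSucc_or_eq_last z with ⟨j, rfl⟩ | rfl
      · simp [castSucc_mem_up, (Fin.castSucc_lt_last j).ne]
      · simp [last_not_mem_up]
  compl_mem := by
    intro A hA
    rcases Finset.mem_union.mp hA with h | h
    · rcases Finset.mem_image.mp h with ⟨C, hC, rfl⟩
      exact Finset.mem_union_right _ (Finset.mem_image.mpr ⟨C, hC, rfl⟩)
    · rcases Finset.mem_image.mp h with ⟨C, hC, rfl⟩
      apply Finset.mem_union_left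
      refine Finset.mem_image.mpr ⟨C, hC, ?_⟩
      ext z; simp
  compat := by
    intro A hA B hB
    have key : ∀ C ∈ T.clusters, ∀ D ∈ T.clusters,
        up C ⊆ up D ∨ up D ⊆ up C ∨ up C ∩ up D = ∅ := by
      intro C hC D hD
      rcases T.laminar C hC D hD with h | h | h
      · exact Or.inl (up_subset h)
      · exact Or.inr (Or.inl (up_subset h))
      · exact Or.inr (Or.inr (by rw [← up_inter, h, up_empty_iff.mpr rfl]))
    rcases Finset.mem_union.mp hA with h1 | h1 <;>
      rcases Finset.mem_union.mp hB with h2 | h2 <;>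
      obtain ⟨C, hC, rfl⟩ := Finset.mem_image.mp h1 <;>
      obtain ⟨D, hD, rfl⟩ := Finset.mem_image.mp h2 <;>
      rcases key C hC D hD with h | h | h
    · exact Or.inl h
    · exact Or.inr (Or.inl h)
    · exact Or.inr (Or.inr (Or.inl h))
    · -- up C vs univ \ up D, up C ⊆ up D : intersection empty
      refine Or.inr (Or.inr (Or.inl ?_))
      rw [Finset.eq_empty_iff_forall_notMem]
      intro x hx
      rw [Finset.mem_inter, Finset.mem_sdiff] at hx
      exact hx.2.2 (h hx.1)
    · -- up D ⊆ up C : union is univ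
      refine Or.inr (Or.inr (Or.inr ?_))
      ext x
      simp only [Finset.mem_union, Finset.mem_sdiff, Finset.mem_univ, true_and, iff_true]
      by_cases hx : x ∈ up D
      · exact Or.inl (h hx)
      · exact Or.inr hx
    · -- disjoint : up C ⊆ univ \ up D
      refine Or.inl ?_
      intro x hx
      rw [Finset.mem_sdiff]
      refine ⟨Finset.mem_univ x, fun hx2 => ?_⟩
      have : x ∈ up C ∩ up D := Finset.mem_inter.mpr ⟨hx, hx2⟩
      rw [h] at this
      exact absurd this (Finset.notMem_empty _)
    · -- univ \ up C vs up D, up C ⊆ up D : union univ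
      refine Or.inr (Or.inr (Or.inr ?_))
      ext x
      simp only [Finset.mem_union, Finset.mem_sdiff, Finset.mem_univ, true_and, iff_true]
      by_cases hx : x ∈ up C
      · exact Or.inr (h hx)
      · exact Or.inl hx
    · -- up D ⊆ up C : intersection empty
      refine Or.inr (Or.inr (Or.inl ?_))
      rw [Finset.eq_empty_iff_forall_notMem]
      intro x hx
      rw [Finset.mem_inter, Finset.mem_sdiff] at hx
      exact hx.1.2 (h hx.2)
    · -- disjoint : up D ⊆ univ \ up C
      refine Or.inr (Or.inl ?_)
      intro x hx
      rw [Finset.mem_sdiff]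
      refine ⟨Finset.mem_univ x, fun hx2 => ?_⟩
      have : x ∈ up C ∩ up D := Finset.mem_inter.mpr ⟨hx2, hx⟩
      rw [h] at this
      exact absurd this (Finset.notMem_empty _)
    · exact Or.inr (Or.inl (Finset.sdiff_subset_sdiff (le_refl _) h))
    · exact Or.inl (Finset.sdiff_subset_sdiff (le_refl _) h)
    · -- disjoint : union univ
      refine Or.inr (Or.inr (Or.inr ?_))
      ext x
      simp only [Finset.mem_union, Finset.mem_sdiff, Finset.mem_univ, true_and, iff_true]
      by_cases hx : x ∈ up C
      · refine Or.inr fun hx2 => ?_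
        have : x ∈ up C ∩ up D := Finset.mem_inter.mpr ⟨hx, hx2⟩
        rw [h] at this
        exact absurd this (Finset.notMem_empty _)
      · exact Or.inl hx

lemma singleton_last_ne_univ (hn : 1 ≤ n) :
    ({Fin.last n} : Finset (Fin (n + 1))) ≠ Finset.univ := by
  intro h
  have := congrArg Finset.card h
  simp [Finset.card_univ] at this
  omega

/-- Backward map: unrooted tree on `n+1` leaves to rooted tree on `n` leaves. -/
def bwd (hn : 1 ≤ n) (T : UTree (n + 1)) : RTree n where
  clusters := (T.splits.filter (fun A => Fin.last n ∉ A)).image down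
  univ_mem := by
    have h1 : ({Fin.last n} : Finset (Fin (n + 1))) ∈ T.splits := by
      rcases T.trivial_mem (Fin.last n) with h | h
      · exact absurd h (singleton_last_ne_univ hn)
      · exact h
    have h2 := T.compl_mem _ h1
    refine Finset.mem_image.mpr ⟨_, Finset.mem_filter.mpr ⟨h2, ?_⟩, ?_⟩
    · simp
    · ext x
      simp [mem_down, (Fin.castSucc_lt_last x).ne]
  singleton_mem := by
    intro x
    have h1 : ({Fin.castSucc x} : Finset (Fin (n + 1))) ∈ T.splits := by
      rcases T.trivial_mem (Fin.castSucc x) with h | h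
      · exfalso
        have := congrArg Finset.card h
        simp [Finset.card_univ] at this
        omega
      · exact h
    refine Finset.mem_image.mpr ⟨_, Finset.mem_filter.mpr ⟨h1, ?_⟩, ?_⟩
    · simp [(Fin.castSucc_lt_last x).ne']
    · ext y
      simp [mem_down, (Fin.castSucc_injective n).eq_iff]
  empty_not_mem := by
    intro h
    rcases Finset.mem_image.mp h with ⟨A, hA, hE⟩
    rw [Finset.mem_filter] at hA
    have : A = ∅ := by
      rw [← up_down hA.2, hE]
      simp [up]
    exact T.empty_not_mem (this ▸ hA.1)
  laminar := by
    intro C hC D hD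
    rcases Finset.mem_image.mp hC with ⟨A, hA, rfl⟩
    rcases Finset.mem_image.mp hD with ⟨B, hB, rfl⟩
    rw [Finset.mem_filter] at hA hB
    rcases T.compat A hA.1 B hB.1 with h | h | h | h
    · exact Or.inl fun x hx => mem_down.mpr (h (mem_down.mp hx))
    · exact Or.inr (Or.inl fun x hx => mem_down.mpr (h (mem_down.mp hx)))
    · refine Or.inr (Or.inr ?_)
      rw [Finset.eq_empty_iff_forall_notMem]
      intro x hx
      rw [Finset.mem_inter] at hx
      have : Fin.castSucc x ∈ A ∩ B :=
        Finset.mem_inter.mpr ⟨mem_down.mp hx.1, mem_down.mp hx.2⟩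
      rw [h] at this
      exact absurd this (Finset.notMem_empty _)
    · exfalso
      have : Fin.last n ∈ A ∪ B := h ▸ Finset.mem_univ _
      rcases Finset.mem_union.mp this with h' | h'
      · exact hA.2 h'
      · exact hB.2 h'

lemma fwd_splits_filter (T : RTree n) :
    (fwd T).splits.filter (fun A => Fin.last n ∉ A) = T.clusters.image up := by
  ext A
  simp only [Finset.mem_filter, fwd, Finset.mem_union, Finset.mem_image]
  constructor
  · rintro ⟨⟨C, hC, rfl⟩ | ⟨C, hC, rfl⟩, h2⟩
    · exact ⟨C, hC, rfl⟩
    · exact absurd (by simp [last_not_mem_up] : Fin.last n ∈ Finset.univ \ up C) h2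
  · rintro ⟨C, hC, rfl⟩
    exact ⟨Or.inl ⟨C, hC, rfl⟩, last_not_mem_up⟩

lemma bwd_fwd (hn : 1 ≤ n) (T : RTree n) : bwd hn (fwd T) = T := by
  apply RTree.clusters_injective
  show ((fwd T).splits.filter (fun A => Fin.last n ∉ A)).image down = T.clusters
  rw [fwd_splits_filter]
  ext C
  simp only [Finset.mem_image]
  constructor
  · rintro ⟨A, ⟨B, hB, rfl⟩, rfl⟩
    rw [down_up]; exact hB
  · intro hC
    exact ⟨up C, ⟨C, hC, rfl⟩, down_up C⟩

lemma fwd_bwd (hn : 1 ≤ n) (T : UTree (n + 1)) : fwd (bwd hn T) = T := by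
  apply UTree.splits_injective
  show (bwd hn T).clusters.image up ∪ (bwd hn T).clusters.image (fun C => Finset.univ \ up C)
      = T.splits
  have hcl : (bwd hn T).clusters = (T.splits.filter (fun A => Fin.last n ∉ A)).image down := rfl
  apply Finset.Subset.antisymm
  · intro A hA
    rcases Finset.mem_union.mp hA with h | h <;>
      rcases Finset.mem_image.mp h with ⟨C, hC, rfl⟩ <;>
      rw [hcl] at hC <;>
      rcases Finset.mem_image.mp hC with ⟨B, hB, rfl⟩ <;>
      rw [Finset.mem_filter] at hB
    · rw [up_down hB.2]; exact hB.1
    · rw [up_down hB.2]; exact T.compl_mem B hB.1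
  · intro A hA
    by_cases h : Fin.last n ∈ A
    · apply Finset.mem_union_right
      refine Finset.mem_image.mpr ⟨down (Finset.univ \ A), ?_, ?_⟩
      · rw [hcl]
        refine Finset.mem_image.mpr ⟨Finset.univ \ A, Finset.mem_filter.mpr
          ⟨T.compl_mem A hA, by simp [h]⟩, rfl⟩
      · rw [up_down (by simp [h])]
        ext x
        simp
    · apply Finset.mem_union_left
      refine Finset.mem_image.mpr ⟨down A, ?_, up_down h⟩
      rw [hcl]
      exact Finset.mem_image.mpr ⟨A, Finset.mem_filter.mpr ⟨hA, h⟩, rfl⟩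

end TreeBij

section Transfer

variable {n : ℕ}

lemma inter_quartet (X : Finset (Fin n)) (C : Finset (Fin n)) :
    up C ∩ (up X ∪ {Fin.last n}) = up (C ∩ X) := by
  ext x
  rcases Fin.eq_castSucc_or_eq_last x with ⟨j, rfl⟩ | rfl
  · simp only [Finset.mem_inter, Finset.mem_union, Finset.mem_singleton,
      castSucc_mem_up, (Fin.castSucc_lt_last j).ne]
    tauto
  · simp [last_not_mem_up]

lemma compl_inter_quartet (X : Finset (Fin n)) (C : Finset (Fin n)) :
    (Finset.univ \ up C) ∩ (up X ∪ {Fin.last n}) = up (X \ C) ∪ {Fin.last n} := by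
  ext x
  rcases Fin.eq_castSucc_or_eq_last x with ⟨j, rfl⟩ | rfl
  · simp only [Finset.mem_inter, Finset.mem_union, Finset.mem_singleton, Finset.mem_sdiff,
      Finset.mem_univ, true_and, castSucc_mem_up, (Fin.castSucc_lt_last j).ne]
    tauto
  · simp [last_not_mem_up]

lemma resolved_fwd_iff (T : RTree n) (X : Finset (Fin n)) (hX : X.card = 3) :
    T.Resolved X ↔ (fwd T).Resolved (up X ∪ {Fin.last n}) := by
  constructor
  · rintro ⟨C, hC, h2⟩
    refine ⟨up C, Finset.mem_union_left _ (Finset.mem_image.mpr ⟨C, hC, rfl⟩), ?_⟩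
    rw [inter_quartet, card_up]
    exact h2
  · rintro ⟨A, hA, h2⟩
    rcases Finset.mem_union.mp hA with h | h <;> rcases Finset.mem_image.mp h with ⟨C, hC, rfl⟩
    · refine ⟨C, hC, ?_⟩
      rwa [inter_quartet, card_up] at h2
    · refine ⟨C, hC, ?_⟩
      rw [compl_inter_quartet,
        Finset.card_union_of_disjoint (by simp [last_not_mem_up]),
        card_up, Finset.card_singleton] at h2
      have h3 : (X \ C).card + (X ∩ C).card = X.card := Finset.card_sdiff_add_card_inter X C
      rw [Finset.inter_comm]
      omega

end Transfer

section Perm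

variable {m : ℕ}

lemma mem_image_perm (σ : Equiv.Perm (Fin m)) {s : Finset (Fin m)} {x : Fin m} :
    x ∈ s.image σ ↔ σ.symm x ∈ s := by
  constructor
  · intro h
    rcases Finset.mem_image.mp h with ⟨y, hy, rfl⟩
    simpa using hy
  · intro h
    exact Finset.mem_image.mpr ⟨σ.symm x, h, by simp⟩

def pmap (σ : Equiv.Perm (Fin m)) (T : UTree m) : UTree m where
  splits := T.splits.image (fun A => A.image σ)
  empty_not_mem := by
    intro h
    rcases Finset.mem_image.mp h with ⟨A, hA, hE⟩
    rw [Finset.image_eq_empty] at hE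
    exact T.empty_not_mem (hE ▸ hA)
  trivial_mem := by
    intro x
    rcases T.trivial_mem (σ.symm x) with h | h
    · left
      have h1 : Fintype.card (Fin m) = 1 := by
        have := congrArg Finset.card h
        simpa [Finset.card_univ] using this.symm
      exact (Finset.eq_univ_of_card _ (by simp [h1]))
    · right
      refine Finset.mem_image.mpr ⟨{σ.symm x}, h, ?_⟩
      simp
  compl_mem := by
    intro A hA
    rcases Finset.mem_image.mp hA with ⟨B, hB, rfl⟩
    refine Finset.mem_image.mpr ⟨Finset.univ \ B, T.compl_mem B hB, ?_⟩
    ext x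
    simp only [mem_image_perm, Finset.mem_sdiff, Finset.mem_univ, true_and]
  compat := by
    intro A hA B hB
    rcases Finset.mem_image.mp hA with ⟨C, hC, rfl⟩
    rcases Finset.mem_image.mp hB with ⟨D, hD, rfl⟩
    rcases T.compat C hC D hD with h | h | h | h
    · exact Or.inl (Finset.image_subset_image h)
    · exact Or.inr (Or.inl (Finset.image_subset_image h))
    · refine Or.inr (Or.inr (Or.inl ?_))
      rw [← Finset.image_inter _ _ σ.injective, h, Finset.image_empty]
    · refine Or.inr (Or.inr (Or.inr ?_))
      rw [← Finset.image_union, h]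
      ext x
      simp [mem_image_perm]

lemma image_symm_image (σ : Equiv.Perm (Fin m)) (A : Finset (Fin m)) :
    (A.image σ).image σ.symm = A := by
  rw [Finset.image_image]
  ext x
  simp

lemma pmap_symm_pmap (σ : Equiv.Perm (Fin m)) (T : UTree m) :
    pmap σ.symm (pmap σ T) = T := by
  apply UTree.splits_injective
  show ((T.splits.image _).image _) = T.splits
  rw [Finset.image_image]
  ext A
  simp only [Finset.mem_image, Function.comp]
  constructor
  · rintro ⟨B, hB, rfl⟩
    rwa [image_symm_image]
  · intro hA
    exact ⟨A, hA, image_symm_image σ A⟩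

def pmapEquiv (σ : Equiv.Perm (Fin m)) : UTree m ≃ UTree m where
  toFun := pmap σ
  invFun := pmap σ.symm
  left_inv := pmap_symm_pmap σ
  right_inv := fun T => by
    have := pmap_symm_pmap σ.symm T
    rwa [Equiv.symm_symm] at this

lemma resolved_pmap_iff (σ : Equiv.Perm (Fin m)) (T : UTree m) (X : Finset (Fin m)) :
    T.Resolved X ↔ (pmap σ T).Resolved (X.image σ) := by
  constructor
  · rintro ⟨A, hA, h2⟩
    refine ⟨A.image σ, Finset.mem_image.mpr ⟨A, hA, rfl⟩, ?_⟩
    rw [← Finset.image_inter _ _ σ.injective, Finset.card_image_of_injective _ σ.injective]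
    exact h2
  · rintro ⟨B, hB, h2⟩
    rcases Finset.mem_image.mp hB with ⟨A, hA, rfl⟩
    refine ⟨A, hA, ?_⟩
    rwa [← Finset.image_inter _ _ σ.injective,
      Finset.card_image_of_injective _ σ.injective] at h2

lemma subtypeCongr_left_apply {α : Type*} {p q : α → Prop} [DecidablePred p] [DecidablePred q]
    (e : { x // p x } ≃ { x // q x }) (f : { x // ¬p x } ≃ { x // ¬q x })
    {x : α} (hx : p x) : Equiv.subtypeCongr e f x = (e ⟨x, hx⟩ : α) := by
  simp [Equiv.subtypeCongr, hx]

lemma exists_perm_image (s t : Finset (Fin m)) (h : s.card = t.card) :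
    ∃ σ : Equiv.Perm (Fin m), s.image σ = t := by
  have h2 : (Finset.univ \ s).card = (Finset.univ \ t).card := by
    rw [Finset.card_sdiff_of_subset (Finset.subset_univ _), Finset.card_sdiff_of_subset (Finset.subset_univ _), h]
  let e : {x // x ∈ s} ≃ {x // x ∈ t} := Finset.equivOfCardEq h
  let e2 : {x // x ∈ Finset.univ \ s} ≃ {x // x ∈ Finset.univ \ t} := Finset.equivOfCardEq h2
  let e' : {x // ¬ x ∈ s} ≃ {x // ¬ x ∈ t} :=
    (Equiv.subtypeEquivRight (fun x => by simp)).trans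
      (e2.trans (Equiv.subtypeEquivRight (fun x => by simp)))
  refine ⟨Equiv.subtypeCongr e e', ?_⟩
  apply Finset.eq_of_subset_of_card_le
  · intro x hx
    rcases Finset.mem_image.mp hx with ⟨y, hy, rfl⟩
    rw [subtypeCongr_left_apply e e' hy]
    exact (e ⟨y, hy⟩).2
  · rw [Finset.card_image_of_injective _ (Equiv.subtypeCongr e e').injective, h]

end Perm

lemma filter_card_congr {α β : Type*} [Fintype α] [Fintype β] (e : α ≃ β)
    (P : α → Prop) (Q : β → Prop) (h : ∀ a, P a ↔ Q (e a)) :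
    (Finset.univ.filter P).card = (Finset.univ.filter Q).card := by
  refine Finset.card_bij' (fun a _ => e a) (fun b _ => e.symm b) ?_ ?_ ?_ ?_
  · intro a ha
    rw [Finset.mem_filter] at ha ⊢
    exact ⟨Finset.mem_univ _, (h a).mp ha.2⟩
  · intro b hb
    rw [Finset.mem_filter] at hb ⊢
    refine ⟨Finset.mem_univ _, (h (e.symm b)).mpr ?_⟩
    rw [Equiv.apply_symm_apply]
    exact hb.2
  · intro a _; exact e.symm_apply_apply a
  · intro b _; exact e.apply_symm_apply b

end TQAux


/-- **Lemma.**  For all `n ≥ 1`, `r'(n) = r(n+1)` and `u'(n) = u(n+1)`: the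
probability that a fixed triplet is resolved (resp. unresolved) in a uniformly
random rooted phylogeny over `[n]` equals the probability that a fixed quartet is
resolved (resp. unresolved) in a uniformly random unrooted phylogeny over `[n+1]`. -/
theorem tripletProb_eq_quartetProb (n : ℕ) (hn : 1 ≤ n)
    (X₃ : Finset (Fin n)) (hX₃ : X₃.card = 3)
    (X₄ : Finset (Fin (n + 1))) (hX₄ : X₄.card = 4) :
    rResProb n X₃ = uResProb (n + 1) X₄ ∧
      1 - rResProb n X₃ = 1 - uResProb (n + 1) X₄ := by
  have hcard4 : (TQAux.up X₃ ∪ {Fin.last n}).card = 4 := by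
    rw [Finset.card_union_of_disjoint (by simp [TQAux.last_not_mem_up]),
      TQAux.card_up, hX₃, Finset.card_singleton]
  obtain ⟨σ, hσ⟩ := TQAux.exists_perm_image (TQAux.up X₃ ∪ {Fin.last n}) X₄
    (by rw [hcard4, hX₄])
  let e1 : RTree n ≃ UTree (n + 1) :=
    ⟨TQAux.fwd, TQAux.bwd hn, TQAux.bwd_fwd hn, TQAux.fwd_bwd hn⟩
  have hcards : Fintype.card (RTree n) = Fintype.card (UTree (n + 1)) :=
    Fintype.card_congr e1
  have hfilt : (Finset.univ.filter fun T : RTree n => T.Resolved X₃).card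
      = (Finset.univ.filter fun T : UTree (n + 1) => T.Resolved X₄).card := by
    rw [TQAux.filter_card_congr e1 _
      (fun T : UTree (n + 1) => T.Resolved (TQAux.up X₃ ∪ {Fin.last n}))
      (fun T => TQAux.resolved_fwd_iff T X₃ hX₃)]
    refine TQAux.filter_card_congr (TQAux.pmapEquiv σ) _ _ (fun T => ?_)
    rw [← hσ]
    exact TQAux.resolved_pmap_iff σ T (TQAux.up X₃ ∪ {Fin.last n})
  have hmain : rResProb n X₃ = uResProb (n + 1) X₄ := by
    unfold rResProb uResProb
    rw [hfilt, hcards]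
  exact ⟨hmain, by rw [hmain]⟩
end
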